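/- arXiv:2002.01957 — 7 statements merged into one kernel-verified Lean document; each statement's English description precedes it below -/
import Mathlib

section
/- Let G and H be finite simple graphs with chromatic number χ(H) = ℓ, and let k be a positive integer. If the lexicographic product G[H] is k-indicated colorable, then G[K_ℓ] is k-indicated colorable, where K_ℓ is the complete graph on ℓ vertices. -/
open SimpleGraph
open scoped Classical

/-- The lexicographic product `G[H]`. -/
def lexProd {α β : Type*} (G : SimpleGraph α) (H : SimpleGraph β) :
    SimpleGraph (α × β) where
  Adj x y := G.Adj x.1 y.1 ∨ (x.1 = y.1 ∧ H.Adj x.2 y.2)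
  symm := ⟨by
    rintro x y (h | ⟨h1, h2⟩)
    · exact Or.inl h.symm
    · exact Or.inr ⟨h1.symm, h2.symm⟩⟩
  loopless := ⟨by
    rintro x (h | ⟨-, h2⟩)
    · exact G.loopless.irrefl _ h
    · exact H.loopless.irrefl _ h2⟩

/-- `AnnWins G k c`: starting from the partial proper coloring `c`, Ann (who presents
uncolored vertices one at a time) has a strategy so that Ben (who properly colors each
presented vertex with one of `k` colors) can always move, and the whole graph gets colored. -/
inductive AnnWins {V : Type*} (G : SimpleGraph V) (k : ℕ) :
    (V → Option (Fin k)) → Prop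
  | done (c : V → Option (Fin k)) (h : ∀ v, (c v).isSome) : AnnWins G k c
  | step (c : V → Option (Fin k)) (v : V) (hv : c v = none)
      (hex : ∃ col : Fin k, ∀ u, G.Adj u v → c u ≠ some col)
      (h : ∀ col : Fin k, (∀ u, G.Adj u v → c u ≠ some col) →
        AnnWins G k (Function.update c v (some col))) : AnnWins G k c

/-- A graph is `k`-indicated colorable if Ann wins the indicated coloring game
with `k` colors starting from the empty coloring. -/
def IndicatedColorable {V : Type*} (G : SimpleGraph V) (k : ℕ) : Prop :=
  AnnWins G k (fun _ => none)

/-- The indicated chromatic number `χᵢ(G)`. -/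
noncomputable def indicatedChromaticNumber {V : Type*} (G : SimpleGraph V) : ℕ :=
  sInf {k | IndicatedColorable G k}

/-- The coloring number `col(G)`: the least `d` such that every nonempty set `S` of
vertices contains a vertex with fewer than `d` neighbours in `S`. -/
noncomputable def coloringNumber {V : Type*} (G : SimpleGraph V) : ℕ :=
  sInf {d : ℕ | ∀ S : Set V, S.Nonempty → ∃ v ∈ S, {u ∈ S | G.Adj v u}.ncard < d}

/-- `F`-freeness: no induced subgraph of `G` is isomorphic to `F`. -/
def IsFreeOf {α β : Type*} (F : SimpleGraph α) (G : SimpleGraph β) : Prop :=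
  IsEmpty (F ↪g G)

/-- The complete expansion of `G`, replacing each vertex `v` by a clique on `m v` vertices. -/
def completeExpansion {V : Type*} (G : SimpleGraph V) (m : V → ℕ) :
    SimpleGraph (Σ v, Fin (m v)) where
  Adj x y := G.Adj x.1 y.1 ∨ (x.1 = y.1 ∧ x ≠ y)
  symm := ⟨by
    rintro x y (h | ⟨h1, h2⟩)
    · exact Or.inl h.symm
    · exact Or.inr ⟨h1.symm, h2.symm⟩⟩
  loopless := ⟨by
    rintro x (h | ⟨-, h2⟩)
    · exact G.loopless.irrefl _ h
    · exact h2 rfl⟩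

/-- The independent expansion of `G`, replacing each vertex `v` by an independent
set of `m v` vertices. -/
def independentExpansion {V : Type*} (G : SimpleGraph V) (m : V → ℕ) :
    SimpleGraph (Σ v, Fin (m v)) where
  Adj x y := G.Adj x.1 y.1
  symm := ⟨fun _ _ h => h.symm⟩
  loopless := ⟨fun _ h => G.loopless.irrefl _ h⟩

/-! ### Auxiliary lemmas -/

/-- Any proper coloring of a graph with chromatic number `ℓ` uses at least `ℓ` colors. -/
lemma aux_le_card_image_of_proper {β γ : Type*} [Fintype β] [Fintype γ] [DecidableEq γ]
    (H : SimpleGraph β) (ℓ : ℕ) (hℓ : H.chromaticNumber = ℓ)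
    (col : β → γ) (hcol : ∀ a b, H.Adj a b → col a ≠ col b) :
    ℓ ≤ (Finset.univ.image col).card := by
  set S : Finset γ := Finset.univ.image col with hS
  have C : H.Coloring S :=
    SimpleGraph.Coloring.mk
      (fun b => ⟨col b, Finset.mem_image_of_mem _ (Finset.mem_univ b)⟩)
      (fun {a b} hab => by
        simp only [Ne, Subtype.mk.injEq]
        exact hcol a b hab)
  have hle := C.colorable.chromaticNumber_le
  rw [hℓ, Fintype.card_coe] at hle
  exact_mod_cast hle

/-- `Function.update_same` with an arbitrary (implicit) decidability instance. -/
lemma aux_update_same' {g d : Type*} {inst : DecidableEq g} (a : g) (v : d) (f : g -> d) :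
    @Function.update g (fun _ => d) inst f a v a = v := Function.update_self a v f

/-- `Function.update_noteq` with an arbitrary (implicit) decidability instance. -/
lemma aux_update_noteq' {g d : Type*} {inst : DecidableEq g} {b a : g} (h : b ≠ a) (v : d)
    (f : g -> d) : @Function.update g (fun _ => d) inst f a v b = f b :=
  Function.update_of_ne h v f

/-- Updating a proper partial coloring at `v` by a color legal at `v` stays proper. -/
lemma aux_proper_update {V : Type*} (G : SimpleGraph V) (k : ℕ)
    (c : V → Option (Fin k)) (v : V) (col : Fin k)
    (hp : ∀ u w t, G.Adj u w → c u = some t → c w ≠ some t)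
    (hcol : ∀ u, G.Adj u v → c u ≠ some col) :
    ∀ u w t, G.Adj u w → Function.update c v (some col) u = some t →
      Function.update c v (some col) w ≠ some t := by
  classical
  intro u w t hadj hu hw
  by_cases huv : u = v
  · subst huv
    rw [Function.update_self] at hu
    have hwv : w ≠ u := fun h => G.loopless.irrefl u (h ▸ hadj)
    rw [Function.update_of_ne hwv] at hw
    exact hcol w hadj.symm (by rw [hw, ← Option.some_inj.mp hu])
  · rw [Function.update_of_ne huv] at hu
    by_cases hwv : w = v
    · subst hwv
      rw [Function.update_self] at hw
      have : t = col := Option.some_inj.mp hw.symm ▸ rfl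
      exact hcol u hadj (by rw [hu, Option.some_inj.mp hw])
    · rw [Function.update_of_ne hwv] at hw
      exact hp u w t hadj hu hw

/-- If Ann wins from a proper partial coloring, the coloring extends to a total
proper coloring. -/
lemma aux_annWins_exists_extension {V : Type*} (G : SimpleGraph V) (k : ℕ)
    {c : V → Option (Fin k)} (hc : AnnWins G k c) :
    (∀ u w t, G.Adj u w → c u = some t → c w ≠ some t) →
    ∃ g : V → Fin k, (∀ v t, c v = some t → g v = t) ∧
      ∀ u w, G.Adj u w → g u ≠ g w := by
  classical
  induction hc with
  | done c hall =>
    intro hp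
    refine ⟨fun v => (c v).get (hall v), fun v t h => by simp [h], ?_⟩
    intro u w hadj heq
    have heq' : (c u).get (hall u) = (c w).get (hall w) := heq
    exact hp u w _ hadj (Option.some_get (hall u)).symm
      ((Option.some_get (hall w)).symm.trans (congrArg some heq'.symm))
  | step c v hv hex h IH =>
    intro hp
    obtain ⟨col, hcol⟩ := hex
    obtain ⟨g, hg1, hg2⟩ := IH col hcol (aux_proper_update G k c v col hp hcol)
    refine ⟨g, fun w t hw => ?_, hg2⟩
    have hwv : w ≠ v := fun hh => by rw [hh, hv] at hw; exact nomatch hw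
    exact hg1 w t (by rw [Function.update_of_ne hwv]; exact hw)

section Key

variable {α β : Type*} [Fintype α] [Fintype β] (G : SimpleGraph α) (H : SimpleGraph β)

/-- Adjacency is preserved by the projection along a proper coloring of `H`. -/
lemma aux_hmap (ℓ : ℕ) (f : β → Fin ℓ) (hf : ∀ a b, H.Adj a b → f a ≠ f b) :
    ∀ p q : α × β, (lexProd G H).Adj p q →
      (lexProd G (⊤ : SimpleGraph (Fin ℓ))).Adj (p.1, f p.2) (q.1, f q.2) := by
  rintro ⟨x1, b1⟩ ⟨x2, b2⟩ (hg | ⟨heq, hH⟩)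
  · exact Or.inl hg
  · exact Or.inr ⟨heq, hf _ _ hH⟩

/-- The key simulation lemma. -/
lemma aux_key (ℓ : ℕ) (hℓ : H.chromaticNumber = ℓ) (hℓpos : 0 < ℓ) (k : ℕ) (hk : 0 < k)
    (f : β → Fin ℓ) (hf : ∀ a b, H.Adj a b → f a ≠ f b)
    (hfs : Function.Surjective f)
    {c : α × β → Option (Fin k)} (hc : AnnWins (lexProd G H) k c) :
    ∀ c' : α × Fin ℓ → Option (Fin k),
    (∀ u w t, (lexProd G (⊤ : SimpleGraph (Fin ℓ))).Adj u w →
      c' u = some t → c' w ≠ some t) →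
    (∀ p : α × β, ∀ t, c p = some t → c' (p.1, f p.2) = some t) →
    (∀ x : α, ∀ j : Fin ℓ, ∀ t, c' (x, j) = some t →
      ∃ b, f b = j ∧ c (x, b) = some t) →
    AnnWins (lexProd G (⊤ : SimpleGraph (Fin ℓ))) k c' := by
  classical
  induction hc with
  | done c hall =>
    intro c' hI1 hI4 hI3
    refine AnnWins.done c' fun v => ?_
    obtain ⟨b, hb⟩ := hfs v.2
    obtain ⟨t, ht⟩ := Option.isSome_iff_exists.mp (hall (v.1, b))
    have h4 := hI4 (v.1, b) t ht
    rw [hb] at h4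
    simp only [Prod.mk.eta] at h4
    rw [h4]; rfl
  | step c v hv hex h IH =>
    intro c' hI1 hI4 hI3
    obtain ⟨x, b⟩ := v
    rcases hcfb : c' (x, f b) with _ | t
    · -- real move: present the vertex (x, f b)
      -- the partial coloring c is proper
      have hcprop : ∀ u w t, (lexProd G H).Adj u w → c u = some t → c w ≠ some t := by
        intro u w t hadj hu hw
        exact hI1 _ _ t (aux_hmap G H ℓ f hf _ _ hadj) (hI4 u t hu) (hI4 w t hw)
      obtain ⟨g, hg1, hg2⟩ :=
        aux_annWins_exists_extension (lexProd G H) k (AnnWins.step c (x, b) hv hex h) hcprop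
      -- counting: the forbidden colors at (x, f b) do not exhaust Fin k
      set R := lexProd G (⊤ : SimpleGraph (Fin ℓ)) with hR
      set F : Finset (Fin k) :=
        Finset.univ.filter (fun t : Fin k => ∃ u, R.Adj u (x, f b) ∧ c' u = some t) with hF
      set A : Finset (Fin k) :=
        Finset.univ.filter (fun t : Fin k => ∃ j : Fin ℓ, j ≠ f b ∧ c' (x, j) = some t) with hA
      set D : Finset (Fin k) :=
        ((Finset.univ : Finset (α × β)).filter (fun p => G.Adj p.1 x)).image g with hD
      have hCcard : ℓ ≤ (Finset.univ.image (fun b2 : β => g (x, b2))).card :=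
        aux_le_card_image_of_proper H ℓ hℓ (fun b2 : β => g (x, b2))
          (fun a b2 hab => hg2 _ _ (Or.inr ⟨rfl, hab⟩))
      set C : Finset (Fin k) := Finset.univ.image (fun b2 : β => g (x, b2)) with hC
      have hCD : Disjoint C D := by
        rw [Finset.disjoint_left]
        intro t htC htD
        obtain ⟨b1, -, hb1⟩ := Finset.mem_image.mp htC
        obtain ⟨p, hp, hpt⟩ := Finset.mem_image.mp htD
        have hadj : (lexProd G H).Adj p (x, b1) :=
          Or.inl (Finset.mem_filter.mp hp).2
        exact hg2 _ _ hadj (by rw [hpt, hb1])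
      have hlk : ℓ ≤ k := le_trans hCcard (by
        simpa using Finset.card_le_univ C)
      have hDcard : D.card ≤ k - ℓ := by
        have h1 : (C ∪ D).card = C.card + D.card := Finset.card_union_of_disjoint hCD
        have h2 : (C ∪ D).card ≤ k := by
          simpa using Finset.card_le_univ (C ∪ D)
        omega
      have hAcard : A.card ≤ ℓ - 1 := by
        have hsub : A ⊆ ((Finset.univ : Finset (Fin ℓ)).erase (f b)).image
            (fun j => (c' (x, j)).getD ⟨0, hk⟩) := by
          intro t ht
          obtain ⟨j, hj, hcj⟩ := (Finset.mem_filter.mp ht).2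
          refine Finset.mem_image.mpr ⟨j, Finset.mem_erase.mpr ⟨hj, Finset.mem_univ _⟩, ?_⟩
          rw [hcj]
          rfl
        calc A.card ≤ _ := Finset.card_le_card hsub
          _ ≤ ((Finset.univ : Finset (Fin ℓ)).erase (f b)).card := Finset.card_image_le
          _ = ℓ - 1 := by rw [Finset.card_erase_of_mem (Finset.mem_univ _), Finset.card_fin]
      have hFsub : F ⊆ A ∪ D := by
        intro t ht
        obtain ⟨⟨x2, j2⟩, hadj, hcu⟩ := (Finset.mem_filter.mp ht).2
        rcases hadj with hg' | ⟨heq, hne⟩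
        · obtain ⟨b2, -, hb2⟩ := hI3 x2 j2 t hcu
          refine Finset.mem_union_right _ (Finset.mem_image.mpr ⟨(x2, b2), ?_, hg1 _ _ hb2⟩)
          exact Finset.mem_filter.mpr ⟨Finset.mem_univ _, hg'⟩
        · refine Finset.mem_union_left _ (Finset.mem_filter.mpr ⟨Finset.mem_univ _, ⟨j2, hne, ?_⟩⟩)
          have hx2 : x2 = x := heq
          rw [← hx2]
          exact hcu
      have hFcard : F.card < k := by
        have h1 : F.card ≤ A.card + D.card :=
          le_trans (Finset.card_le_card hFsub) (Finset.card_union_le _ _)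
        omega
      have hexR : ∃ col : Fin k, ∀ u, R.Adj u (x, f b) → c' u ≠ some col := by
        by_contra hcon
        push_neg at hcon
        have hsub : (Finset.univ : Finset (Fin k)) ⊆ F := by
          intro t ht
          obtain ⟨u, hu1, hu2⟩ := hcon t
          exact Finset.mem_filter.mpr ⟨Finset.mem_univ _, u, hu1, hu2⟩
        have := Finset.card_le_card hsub
        simp only [Finset.card_univ, Fintype.card_fin] at this
        omega
      refine AnnWins.step c' (x, f b) hcfb hexR ?_
      intro col2 hcol2
      have hsim : ∀ u, (lexProd G H).Adj u (x, b) → c u ≠ some col2 := by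
        rintro ⟨x2, b2⟩ hadj hc2
        exact hcol2 (x2, f b2) (aux_hmap G H ℓ f hf _ _ hadj) (hI4 _ _ hc2)
      refine IH col2 hsim _ ?_ ?_ ?_
      · -- I1 for updated c'
        exact aux_proper_update R k c' (x, f b) col2 hI1 hcol2
      · -- I4
        intro p t hp
        by_cases hpv : p = (x, b)
        · subst hpv
          rw [aux_update_same'] at hp
          rw [aux_update_same']
          exact hp ▸ rfl
        · rw [aux_update_noteq' hpv] at hp
          have h4 := hI4 p t hp
          have hne : (p.1, f p.2) ≠ (x, f b) := by
            intro hh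
            rw [hh, hcfb] at h4
            exact nomatch h4
          rw [aux_update_noteq' hne]
          exact h4
      · -- I3
        intro x2 j t hct
        by_cases hjv : ((x2, j) : α × Fin ℓ) = (x, f b)
        · rw [hjv, aux_update_same'] at hct
          have hx2 : x2 = x := congrArg Prod.fst hjv
          have hj : j = f b := congrArg Prod.snd hjv
          refine ⟨b, hj.symm, ?_⟩
          rw [hx2, aux_update_same']
          exact hct
        · rw [aux_update_noteq' hjv] at hct
          obtain ⟨b2, hb2, hcb2⟩ := hI3 x2 j t hct
          refine ⟨b2, hb2, ?_⟩
          have hne : ((x2, b2) : α × β) ≠ (x, b) := by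
            intro hh
            rw [hh, hv] at hcb2
            exact nomatch hcb2
          rw [aux_update_noteq' hne]
          exact hcb2
    · -- pretend move: (x, f b) is already colored with t
      have hlegal : ∀ u, (lexProd G H).Adj u (x, b) → c u ≠ some t := by
        rintro ⟨x2, b2⟩ hadj hc2
        exact hI1 _ _ t (aux_hmap G H ℓ f hf _ _ hadj) (hI4 _ _ hc2) hcfb
      refine IH t hlegal c' hI1 ?_ ?_
      · intro p s hp
        by_cases hpv : p = (x, b)
        · subst hpv
          rw [aux_update_same'] at hp
          rw [← Option.some_inj.mp hp]
          exact hcfb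
        · rw [aux_update_noteq' hpv] at hp
          exact hI4 p s hp
      · intro x2 j s hcs
        obtain ⟨b2, hb2, hcb2⟩ := hI3 x2 j s hcs
        refine ⟨b2, hb2, ?_⟩
        have hne : ((x2, b2) : α × β) ≠ (x, b) := by
          intro hh
          rw [hh, hv] at hcb2
          exact nomatch hcb2
        rw [aux_update_noteq' hne]
        exact hcb2

end Key

/-- If `χ(H) = ℓ` and `G[H]` is `k`-indicated colorable, then `G[K_ℓ]` is
`k`-indicated colorable. -/
theorem lexProd_complete_indicatedColorable_of_lexProd_indicatedColorable
    {α β : Type*} [Fintype α] [Fintype β] (G : SimpleGraph α) (H : SimpleGraph β)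
    (ℓ : ℕ) (hℓ : H.chromaticNumber = ℓ) (k : ℕ) (hk : 0 < k)
    (h : IndicatedColorable (lexProd G H) k) :
    IndicatedColorable (lexProd G (⊤ : SimpleGraph (Fin ℓ))) k := by
  
  classical
  rcases Nat.eq_zero_or_pos ℓ with rfl | hℓpos
  · exact AnnWins.done _ (fun v => v.2.elim0)
  have hcolorable : H.Colorable ℓ := by
    rw [← SimpleGraph.chromaticNumber_le_iff_colorable, hℓ]
  obtain ⟨C⟩ := hcolorable
  have hf : ∀ a b, H.Adj a b → C a ≠ C b := fun a b hab => C.valid hab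
  set f₀ : β → Fin ℓ := fun b => C b with hf₀
  have hf' : ∀ a b, H.Adj a b → f₀ a ≠ f₀ b := hf
  have hsurj : Function.Surjective f₀ := by
    have h1 := aux_le_card_image_of_proper H ℓ hℓ f₀ hf'
    have h2 : (Finset.univ.image f₀).card = Fintype.card (Fin ℓ) := by
      have h3 := Finset.card_le_univ (Finset.univ.image f₀)
      simp only [Finset.card_univ, Fintype.card_fin] at h3 ⊢
      omega
    have h3 := Finset.eq_univ_of_card _ h2
    intro j
    have hj : j ∈ Finset.univ.image f₀ := h3 ▸ Finset.mem_univ j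
    obtain ⟨b, -, hb⟩ := Finset.mem_image.mp hj
    exact ⟨b, hb⟩
  have h' : AnnWins (lexProd G H) k (fun _ => none) := h
  refine aux_key G H ℓ hℓ hℓpos k hk f₀ hf' hsurj h' _ ?_ ?_ ?_
  · intro u w t _ hu
    exact nomatch hu
  · intro p t hp
    exact nomatch hp
  · intro x j t hct
    exact nomatch hct
end

section
/- Let G and H be finite simple graphs, let G′ be a nonempty induced subgraph of G with minimum degree δ(G′) = col(G) − 1, and let H′ be a nonempty induced subgraph of H with minimum degree δ(H′) = col(H) − 1. Then col(G[H]) ≥ col(G)·|V(H′)| − |V(H′)| + col(H); consequently col(G[H]) − col(G)·col(H) ≥ (col(G) − 1)·(|V(H′)| − 1 − δ(H′)). -/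
open SimpleGraph
open scoped Classical

lemma minDegree_le_filter_card {V : Type*} [Fintype V] (G : SimpleGraph V)
    (s : Finset V) (a : V) (ha : a ∈ s) :
    (G.induce (s : Set V)).minDegree ≤ (s.filter (G.Adj a)).card := by
  haveI : Nonempty ((s : Set V)) := ⟨⟨a, ha⟩⟩
  refine le_trans ((G.induce (s : Set V)).minDegree_le_degree ⟨a, ha⟩) ?_
  rw [SimpleGraph.degree]
  apply Finset.card_le_card_of_injOn (fun x => x.val)
  · intro x hx
    rw [Finset.mem_coe, SimpleGraph.mem_neighborFinset] at hx
    simp only [Finset.mem_coe, Finset.mem_filter]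
    exact ⟨x.2, hx⟩
  · exact fun x _ y _ h => Subtype.val_injective h

lemma key_bound {α β : Type*} [Fintype α] [Fintype β]
    (G : SimpleGraph α) (H : SimpleGraph β)
    (s : Finset α) (hs : s.Nonempty) (t : Finset β) (ht : t.Nonempty) :
    (G.induce (s : Set α)).minDegree * t.card + (H.induce (t : Set β)).minDegree + 1
      ≤ coloringNumber (lexProd G H) := by
  set δG := (G.induce (s : Set α)).minDegree
  set δH := (H.induce (t : Set β)).minDegree
  have hne : {d : ℕ | ∀ S : Set (α × β), S.Nonempty →
      ∃ v ∈ S, {u ∈ S | (lexProd G H).Adj v u}.ncard < d}.Nonempty := by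
    refine ⟨Fintype.card (α × β) + 1, fun S hS => ?_⟩
    obtain ⟨v, hv⟩ := hS
    refine ⟨v, hv, ?_⟩
    have := Set.ncard_le_ncard (Set.subset_univ {u ∈ S | (lexProd G H).Adj v u})
      Set.finite_univ
    rw [Set.ncard_univ, Nat.card_eq_fintype_card] at this
    omega
  refine le_csInf hne ?_
  intro d hd
  obtain ⟨v, hv, hlt⟩ := hd ((s ×ˢ t : Finset (α × β)) : Set (α × β))
    ⟨(hs.choose, ht.choose), by
      simp only [Finset.coe_product, Set.mem_prod]
      exact ⟨hs.choose_spec, ht.choose_spec⟩⟩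
  obtain ⟨a, b⟩ := v
  simp only [Finset.mem_coe, Finset.mem_product] at hv
  set A := s.filter (G.Adj a) with hA
  set B := t.filter (H.Adj b) with hB
  set T : Finset (α × β) := A ×ˢ t ∪ {a} ×ˢ B with hT
  have hsub : (T : Set (α × β)) ⊆
      {u ∈ ((s ×ˢ t : Finset (α × β)) : Set (α × β)) | (lexProd G H).Adj (a, b) u} := by
    intro ⟨x, y⟩ hxy
    simp only [hT, Finset.coe_union, Set.mem_union, Finset.mem_coe,
      Finset.mem_product, Finset.mem_singleton, hA, hB, Finset.mem_filter] at hxy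
    rcases hxy with ⟨⟨hxs, hax⟩, hyt⟩ | ⟨hxa, hyt, hby⟩
    · exact ⟨by simpa [Finset.mem_product] using And.intro hxs hyt, Or.inl hax⟩
    · subst hxa
      exact ⟨by simpa [Finset.mem_product] using And.intro hv.1 hyt, Or.inr ⟨rfl, hby⟩⟩
  have hfin : {u ∈ ((s ×ˢ t : Finset (α × β)) : Set (α × β)) |
      (lexProd G H).Adj (a, b) u}.Finite := Set.toFinite _
  have hcard : T.card ≤ {u ∈ ((s ×ˢ t : Finset (α × β)) : Set (α × β)) |
      (lexProd G H).Adj (a, b) u}.ncard := by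
    rw [← Set.ncard_coe_finset]
    exact Set.ncard_le_ncard hsub hfin
  have hTcard : δG * t.card + δH ≤ T.card := by
    have hdisj : Disjoint (A ×ˢ t) (({a} : Finset α) ×ˢ B) := by
      rw [Finset.disjoint_left]
      rintro ⟨x, y⟩ hx hy
      simp only [Finset.mem_product, Finset.mem_singleton, hA, Finset.mem_filter] at hx hy
      exact G.loopless.irrefl a (hy.1 ▸ hx.1.2)
    rw [hT, Finset.card_union_of_disjoint hdisj, Finset.card_product,
      Finset.card_product, Finset.card_singleton, one_mul]
    have h1 : δG ≤ A.card := minDegree_le_filter_card G s a hv.1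
    have h2 : δH ≤ B.card := minDegree_le_filter_card H t b hv.2
    exact Nat.add_le_add (Nat.mul_le_mul_right _ h1) h2
  omega

/-- If `G′ = G[s]` is a nonempty induced subgraph of `G` with `δ(G′) = col(G) - 1` and
`H′ = H[t]` is a nonempty induced subgraph of `H` with `δ(H′) = col(H) - 1`, then
`col(G[H]) ≥ col(G)·|V(H′)| - |V(H′)| + col(H)`, and consequently
`col(G[H]) - col(G)·col(H) ≥ (col(G) - 1)·(|V(H′)| - 1 - δ(H′))`. -/
theorem coloringNumber_lexProd_lower_bound {α β : Type*} [Fintype α] [Fintype β]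
    (G : SimpleGraph α) (H : SimpleGraph β)
    (s : Finset α) (hs : s.Nonempty) (t : Finset β) (ht : t.Nonempty)
    (hG : (G.induce (s : Set α)).minDegree + 1 = coloringNumber G)
    (hH : (H.induce (t : Set β)).minDegree + 1 = coloringNumber H) :
    (coloringNumber G : ℤ) * t.card - t.card + coloringNumber H
        ≤ (coloringNumber (lexProd G H) : ℤ) ∧
    ((coloringNumber G : ℤ) - 1) *
        ((t.card : ℤ) - 1 - (H.induce (t : Set β)).minDegree)
      ≤ (coloringNumber (lexProd G H) : ℤ) - coloringNumber G * coloringNumber H := by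
  have key := key_bound G H s hs t ht
  set δG := (G.induce (s : Set α)).minDegree
  set δH := (H.induce (t : Set β)).minDegree
  have h1 : (δG : ℤ) * t.card + δH + 1 ≤ (coloringNumber (lexProd G H) : ℤ) := by
    exact_mod_cast key
  have hG' : (δG : ℤ) + 1 = coloringNumber G := by exact_mod_cast hG
  have hH' : (δH : ℤ) + 1 = coloringNumber H := by exact_mod_cast hH
  constructor
  · rw [← hG', ← hH']; nlinarith [h1]
  · rw [← hG', ← hH']; nlinarith [h1]
end

section
/- Let t ≥ 4 and let G be a finite simple graph with no induced subgraph isomorphic to the complement P̄_t of the path on t vertices. Then every complete expansion 𝕂[G] of G (with arbitrary positive clique sizes m_v) has no induced subgraph isomorphic to P̄_t. -/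
open SimpleGraph
open scoped Classical

lemma ce_adj {V : Type*} (G : SimpleGraph V) (m : V → ℕ) (x y : Σ v, Fin (m v)) :
    (completeExpansion G m).Adj x y ↔ (G.Adj x.1 y.1 ∨ (x.1 = y.1 ∧ x ≠ y)) := Iff.rfl

lemma no_twins_aux (t : ℕ) (ht : 4 ≤ t) (x y : Fin t) (hlt : x.val < y.val)
    (hxy : (pathGraph t)ᶜ.Adj x y)
    (hs : ∀ z : Fin t, z ≠ x → z ≠ y → ((pathGraph t)ᶜ.Adj z x ↔ (pathGraph t)ᶜ.Adj z y)) :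
    False := by
  obtain ⟨hne, hna⟩ := (SimpleGraph.compl_adj _ _ _).mp hxy
  rw [pathGraph_adj] at hna
  have hy : x.val + 2 ≤ y.val := by omega
  have hyt : y.val < t := y.isLt
  rcases Nat.eq_zero_or_pos x.val with h0 | h1
  · have hy2 : y.val = 2 := by
      have h2 := hs ⟨1, by omega⟩ (by simp [Fin.ext_iff]; omega) (by simp [Fin.ext_iff]; omega)
      simp only [SimpleGraph.compl_adj, pathGraph_adj, ne_eq, Fin.ext_iff] at h2
      omega
    have h3 := hs ⟨3, by omega⟩ (by simp [Fin.ext_iff]; omega) (by simp [Fin.ext_iff]; omega)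
    simp only [SimpleGraph.compl_adj, pathGraph_adj, ne_eq, Fin.ext_iff] at h3
    omega
  · have h := hs ⟨x.val - 1, by omega⟩ (by simp [Fin.ext_iff]; omega) (by simp [Fin.ext_iff]; omega)
    simp only [SimpleGraph.compl_adj, pathGraph_adj, ne_eq, Fin.ext_iff] at h
    omega

lemma no_twins (t : ℕ) (ht : 4 ≤ t) (x y : Fin t)
    (hxy : (pathGraph t)ᶜ.Adj x y)
    (hs : ∀ z : Fin t, z ≠ x → z ≠ y → ((pathGraph t)ᶜ.Adj z x ↔ (pathGraph t)ᶜ.Adj z y)) :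
    False := by
  rcases lt_trichotomy x.val y.val with h | h | h
  · exact no_twins_aux t ht x y h hxy hs
  · exact hxy.ne (Fin.ext h)
  · exact no_twins_aux t ht y x h hxy.symm (fun z hz1 hz2 => (hs z hz2 hz1).symm)

/-- If `t ≥ 4` and `G` is `P̄_t`-free, then every complete expansion of `G` is `P̄_t`-free. -/
theorem completeExpansion_complPathFree {V : Type*} [Fintype V] (t : ℕ) (ht : 4 ≤ t)
    (G : SimpleGraph V) (hG : IsFreeOf (pathGraph t)ᶜ G)
    (m : V → ℕ) (hm : ∀ v, 0 < m v) :
    IsFreeOf (pathGraph t)ᶜ (completeExpansion G m) := by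
  constructor
  intro f
  have hkey : ∀ a b : Fin t, a ≠ b → (f a).1 ≠ (f b).1 := by
    intro a b hab heq
    have hadj : (completeExpansion G m).Adj (f a) (f b) :=
      (ce_adj G m _ _).mpr (Or.inr ⟨heq, fun h => hab (f.injective h)⟩)
    have hab' : (pathGraph t)ᶜ.Adj a b := f.map_adj_iff.mp hadj
    refine no_twins t ht a b hab' ?_
    intro z hz1 hz2
    rw [← f.map_adj_iff, ← f.map_adj_iff, ce_adj, ce_adj]
    constructor
    · rintro (h | ⟨h1, h2⟩)
      · exact Or.inl (heq ▸ h)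
      · exact Or.inr ⟨h1.trans heq, fun h => hz2 (f.injective h)⟩
    · rintro (h | ⟨h1, h2⟩)
      · exact Or.inl (heq ▸ h)
      · exact Or.inr ⟨h1.trans heq.symm, fun h => hz1 (f.injective h)⟩
  have hemb : (pathGraph t)ᶜ ↪g G := by
    refine ⟨⟨fun a => (f a).1, fun a b h => ?_⟩, ?_⟩
    · by_contra hab
      exact hkey a b hab h
    · intro a b
      constructor
      · intro h
        exact f.map_adj_iff.mp ((ce_adj G m _ _).mpr (Or.inl h))
      · intro h
        rcases (ce_adj G m _ _).mp (f.map_adj_iff.mpr h) with h' | ⟨h1, -⟩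
        · exact h'
        · exact absurd h1 (hkey a b h.ne)
  exact hG.false hemb
end

section
/- Let G be a finite complete multipartite graph. Then every complete expansion 𝕂[G] of G (with arbitrary positive clique sizes m_v) is k-indicated colorable for every integer k ≥ χ(𝕂[G]). -/
open SimpleGraph
open scoped Classical

-- AUX START

lemma my_update_same {α : Sort*} {β : α → Sort*} {D : DecidableEq α}
    (f : ∀ a, β a) (a : α) (v : β a) :
    @Function.update α β D f a v a = v := by
  unfold Function.update
  simp

lemma my_update_noteq {α : Sort*} {β : α → Sort*} {D : DecidableEq α}
    (f : ∀ a, β a) (a : α) (v : β a) (x : α) (h : x ≠ a) :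
    @Function.update α β D f a v x = f x := by
  unfold Function.update
  exact dif_neg h

lemma completeExpansion_adj {V : Type*} (G : SimpleGraph V) (m : V → ℕ)
    (x y : Σ v, Fin (m v)) :
    (completeExpansion G m).Adj x y ↔ G.Adj x.1 y.1 ∨ (x.1 = y.1 ∧ x ≠ y) := Iff.rfl

lemma proper_update {W : Type*} (H : SimpleGraph W) {k : ℕ}
    (c : W → Option (Fin k)) (x : W) (col : Fin k)
    (hP : ∀ a b, H.Adj a b → ∀ q, c a = some q → c b ≠ some q)
    (hcol : ∀ u, H.Adj u x → c u ≠ some col) :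
    ∀ a b, H.Adj a b → ∀ q, Function.update c x (some col) a = some q →
      Function.update c x (some col) b ≠ some q := by
  intro a b hab q ha hb
  by_cases hax : a = x
  · have hbx : b ≠ x := by
      intro h
      rw [hax, h] at hab
      exact H.loopless.irrefl _ hab
    rw [hax, my_update_same] at ha
    rw [my_update_noteq _ _ _ _ hbx] at hb
    have hq : col = q := by injection ha
    subst hq
    have hadj : H.Adj b x := hax ▸ (H.adj_symm hab)
    exact hcol b hadj hb
  · rw [my_update_noteq _ _ _ _ hax] at ha
    by_cases hbx : b = x
    · rw [hbx, my_update_same] at hb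
      have hq : col = q := by injection hb
      subst hq
      exact hcol a (hbx ▸ hab) ha
    · rw [my_update_noteq _ _ _ _ hbx] at hb
      exact hP a b hab q ha hb


lemma card_filter_update_le {W : Type*} [Fintype W] {k : ℕ} {D : DecidableEq W}
    (c : W → Option (Fin k)) (x : W) (col : Fin k) (hx : c x = none) :
    (Finset.univ.filter
      (fun y => @Function.update W (fun _ => Option (Fin k)) D c x (some col) y = none)).card
      ≤ (Finset.univ.filter fun y => c y = none).card - 1 := by
  have hsub : (Finset.univ.filter
      (fun y => @Function.update W (fun _ => Option (Fin k)) D c x (some col) y = none)) ⊆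
      (Finset.univ.filter fun y => c y = none).erase x := by
    intro y hy
    rw [Finset.mem_filter] at hy
    have hyx : y ≠ x := by
      intro h
      rw [h, my_update_same] at hy
      exact Option.some_ne_none _ hy.2
    rw [my_update_noteq _ _ _ _ hyx] at hy
    exact Finset.mem_erase.mpr ⟨hyx, Finset.mem_filter.mpr ⟨Finset.mem_univ _, hy.2⟩⟩
  have hmem : x ∈ Finset.univ.filter fun y => c y = none :=
    Finset.mem_filter.mpr ⟨Finset.mem_univ _, hx⟩
  have := Finset.card_le_card hsub
  rwa [Finset.card_erase_of_mem hmem] at this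

lemma phase2 {V : Type*} [Fintype V] {ι : Type} {G : SimpleGraph V} {p : V → ι}
    (hG : ∀ u v, G.Adj u v ↔ p u ≠ p v) {m : V → ℕ} (b : V → V)
    (hb1 : ∀ v, p (b v) = p v)
    (hb2 : ∀ v u, p u = p v → m u ≤ m (b v))
    (hb3 : ∀ u v, p u = p v → b u = b v)
    {k : ℕ} :
    ∀ (n : ℕ) (c : (Σ v, Fin (m v)) → Option (Fin k)),
      (Finset.univ.filter fun x => c x = none).card ≤ n →
      (∀ x y, (completeExpansion G m).Adj x y → ∀ a, c x = some a → c y ≠ some a) →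
      (∀ x : Σ v, Fin (m v), x.1 = b x.1 → (c x).isSome) →
      AnnWins (completeExpansion G m) k c := by
  intro n
  induction n with
  | zero =>
    intro c hcard hP hF
    refine AnnWins.done c fun x => ?_
    have h0 : (Finset.univ.filter fun x => c x = none) = ∅ := by
      rw [← Finset.card_eq_zero]
      omega
    rcases h : c x with _ | a
    · exact absurd h (Finset.filter_eq_empty_iff.mp h0 (Finset.mem_univ x))
    · rfl
  | succ n ih =>
    intro c hcard hP hF
    by_cases hall : ∀ x, (c x).isSome
    · exact AnnWins.done c hall
    · push_neg at hall
      obtain ⟨x, hx⟩ := hall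
      obtain ⟨v, ix⟩ := x
      have hxnone : c ⟨v, ix⟩ = none := Option.not_isSome_iff_eq_none.mp hx
      set w := b v with hw
      have hwb : w = b w := (hb3 w v (hb1 v)).symm
      have hFw : ∀ i : Fin (m w), (c ⟨w, i⟩).isSome := fun i => hF ⟨w, i⟩ hwb
      set g : Fin (m w) → Fin k := fun i => (c ⟨w, i⟩).get (hFw i) with hgdef
      have hg : ∀ i, c ⟨w, i⟩ = some (g i) := fun i => (Option.some_get (hFw i)).symm
      have ginj : Function.Injective g := by
        intro i i' hii
        by_contra hne
        have hadj : (completeExpansion G m).Adj ⟨w, i⟩ ⟨w, i'⟩ :=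
          Or.inr ⟨rfl, fun h => hne (by cases h; rfl)⟩
        exact hP _ _ hadj (g i) (hg i) (by rw [hg i', hii])
      set S : Finset (Fin k) := Finset.univ.filter
        (fun a : Fin k => ∃ i : Fin (m v),
          (⟨v, i⟩ : Σ u, Fin (m u)) ≠ ⟨v, ix⟩ ∧ c ⟨v, i⟩ = some a) with hSdef
      have hSmem : ∀ a, a ∈ S ↔ ∃ i : Fin (m v),
          (⟨v, i⟩ : Σ u, Fin (m u)) ≠ ⟨v, ix⟩ ∧ c ⟨v, i⟩ = some a := by
        intro a; simp [hSdef]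
      have hScard : S.card ≤ m v - 1 := by
        have h1 : S.card ≤ (Finset.univ.erase ix).card := by
          apply Finset.card_le_card_of_injOn
            (fun a => if h : ∃ i : Fin (m v),
              (⟨v, i⟩ : Σ u, Fin (m u)) ≠ ⟨v, ix⟩ ∧ c ⟨v, i⟩ = some a
              then h.choose else ix)
          · intro a ha
            rw [Finset.mem_coe, hSmem] at ha
            simp only [dif_pos ha]
            have hspec := ha.choose_spec
            refine Finset.mem_erase.mpr ⟨fun h => hspec.1 (by rw [h]), Finset.mem_univ _⟩
          · intro a ha a' ha' hfe
            rw [Finset.mem_coe, hSmem] at ha ha'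
            simp only [dif_pos ha, dif_pos ha'] at hfe
            have h1 := ha.choose_spec.2
            have h2 := ha'.choose_spec.2
            rw [hfe, h2] at h1
            exact (Option.some_injective _ h1).symm
        rwa [Finset.card_erase_of_mem (Finset.mem_univ _), Finset.card_univ,
          Fintype.card_fin] at h1
      set T : Finset (Fin k) := Finset.univ.image g with hTdef
      have hTcard : T.card = m w := by
        rw [hTdef, Finset.card_image_of_injective _ ginj, Finset.card_univ, Fintype.card_fin]
      have hlt : S.card < T.card := by
        have hmv : 0 < m v := ix.pos
        have hmw : m v ≤ m w := hb2 v v rfl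
        rw [hTcard]
        omega
      have hnotsub : ¬ T ⊆ S := fun h => absurd (Finset.card_le_card h) (not_le.mpr hlt)
      obtain ⟨a, haT, haS⟩ := Finset.not_subset.mp hnotsub
      obtain ⟨i₀, -, hi₀⟩ := Finset.mem_image.mp haT
      have hca : c ⟨w, i₀⟩ = some a := by rw [hg i₀, hi₀]
      have hleg : ∀ u, (completeExpansion G m).Adj u ⟨v, ix⟩ → c u ≠ some a := by
        rintro u hadj hua
        rcases hadj with h1 | ⟨h2, h3⟩
        · have hpw : p u.1 ≠ p w := by
            rw [hb1 v]; exact (hG u.1 v).mp h1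
          have hadj2 : (completeExpansion G m).Adj u ⟨w, i₀⟩ :=
            Or.inl ((hG u.1 w).mpr hpw)
          exact hP u ⟨w, i₀⟩ hadj2 a hua hca
        · obtain ⟨uv, ui⟩ := u
          cases h2
          exact haS ((hSmem a).mpr ⟨ui, h3, hua⟩)
      refine AnnWins.step c ⟨v, ix⟩ hxnone ⟨a, hleg⟩ ?_
      intro col hcol
      apply ih
      · refine le_trans (card_filter_update_le c ⟨v, ix⟩ col hxnone) ?_
        omega
      · exact proper_update _ c ⟨v, ix⟩ col hP hcol
      · intro y hy
        by_cases hyx : y = ⟨v, ix⟩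
        · rw [hyx, my_update_same]; rfl
        · rw [my_update_noteq _ _ _ _ hyx]; exact hF y hy

lemma phase1 {V : Type*} [Fintype V] {ι : Type} {G : SimpleGraph V} {p : V → ι}
    (hG : ∀ u v, G.Adj u v ↔ p u ≠ p v) {m : V → ℕ} (b : V → V)
    (hb1 : ∀ v, p (b v) = p v)
    (hb2 : ∀ v u, p u = p v → m u ≤ m (b v))
    (hb3 : ∀ u v, p u = p v → b u = b v)
    {k : ℕ}
    (hk' : (Finset.univ.filter fun x : Σ v, Fin (m v) => x.1 = b x.1).card ≤ k) :
    ∀ (L : List (Σ v, Fin (m v))) (c : (Σ v, Fin (m v)) → Option (Fin k)),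
      (∀ x y, (completeExpansion G m).Adj x y → ∀ a, c x = some a → c y ≠ some a) →
      (∀ x : Σ v, Fin (m v), (c x).isSome → x.1 = b x.1) →
      (∀ x : Σ v, Fin (m v), x.1 = b x.1 → (c x).isSome ∨ x ∈ L) →
      L.Nodup →
      (∀ x ∈ L, c x = none) →
      (∀ x ∈ L, x.1 = b x.1) →
      AnnWins (completeExpansion G m) k c := by
  intro L
  induction L with
  | nil =>
    intro c hP hsome hcov hnd hLn hLb
    exact phase2 hG b hb1 hb2 hb3 _ c le_rfl hP
      (fun x hx => (hcov x hx).resolve_right List.not_mem_nil)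
  | cons x L' ih =>
    intro c hP hsome hcov hnd hLn hLb
    have hxnone : c x = none := hLn x List.mem_cons_self
    set F : Finset (Fin k) := Finset.univ.filter
      (fun a : Fin k => ∃ u, (completeExpansion G m).Adj u x ∧ c u = some a) with hFdef
    have hFmem : ∀ a, a ∈ F ↔ ∃ u, (completeExpansion G m).Adj u x ∧ c u = some a := by
      intro a; simp [hFdef]
    set colored : Finset (Σ v, Fin (m v)) :=
      Finset.univ.filter (fun u => (c u).isSome) with hcoldef
    have hFc : F.card ≤ colored.card := by
      apply Finset.card_le_card_of_injOn
        (fun a => if h : ∃ u, (completeExpansion G m).Adj u x ∧ c u = some a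
          then h.choose else x)
      · intro a ha
        rw [Finset.mem_coe, hFmem] at ha
        simp only [dif_pos ha]
        have hspec := ha.choose_spec
        exact Finset.mem_filter.mpr ⟨Finset.mem_univ _, by rw [hspec.2]; rfl⟩
      · intro a ha a' ha' hfe
        rw [Finset.mem_coe, hFmem] at ha ha'
        simp only [dif_pos ha, dif_pos ha'] at hfe
        have h1 := ha.choose_spec.2
        have h2 := ha'.choose_spec.2
        rw [hfe, h2] at h1
        exact (Option.some_injective _ h1).symm
    set chosen : Finset (Σ v, Fin (m v)) :=
      Finset.univ.filter (fun y => y.1 = b y.1) with hchdef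
    have hLsub : (x :: L').toFinset ⊆ chosen := by
      intro y hy
      rw [List.mem_toFinset] at hy
      exact Finset.mem_filter.mpr ⟨Finset.mem_univ _, hLb y hy⟩
    have hcolsub : colored ⊆ chosen \ (x :: L').toFinset := by
      intro u hu
      rw [hcoldef, Finset.mem_filter] at hu
      refine Finset.mem_sdiff.mpr ⟨Finset.mem_filter.mpr ⟨Finset.mem_univ _, hsome u hu.2⟩, ?_⟩
      rw [List.mem_toFinset]
      intro hmem
      rw [hLn u hmem] at hu
      exact absurd hu.2 (by simp)
    have hcolcard : colored.card ≤ chosen.card - (L'.length + 1) := by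
      have h1 := Finset.card_le_card hcolsub
      rw [Finset.card_sdiff_of_subset hLsub, List.toFinset_card_of_nodup hnd] at h1
      simpa using h1
    have hchpos : 1 ≤ chosen.card := by
      refine Finset.card_pos.mpr ⟨x, ?_⟩
      exact Finset.mem_filter.mpr ⟨Finset.mem_univ _, hLb x List.mem_cons_self⟩
    have hFk : F.card < k := by
      have := hk'
      omega
    have hnotsub : ¬ (Finset.univ : Finset (Fin k)) ⊆ F := by
      intro h
      have := Finset.card_le_card h
      rw [Finset.card_univ, Fintype.card_fin] at this
      omega
    obtain ⟨a, -, haF⟩ := Finset.not_subset.mp hnotsub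
    have hleg : ∀ u, (completeExpansion G m).Adj u x → c u ≠ some a := by
      intro u hadj hua
      exact haF ((hFmem a).mpr ⟨u, hadj, hua⟩)
    refine AnnWins.step c x hxnone ⟨a, hleg⟩ ?_
    intro col hcol
    have hxL' : x ∉ L' := (List.nodup_cons.mp hnd).1
    apply ih
    · exact proper_update _ c x col hP hcol
    · intro y hy
      by_cases hyx : y = x
      · rw [hyx]; exact hLb x List.mem_cons_self
      · rw [my_update_noteq _ _ _ _ hyx] at hy; exact hsome y hy
    · intro y hy
      by_cases hyx : y = x
      · left; rw [hyx, my_update_same]; rfl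
      · rw [my_update_noteq _ _ _ _ hyx]
        rcases hcov y hy with h | h
        · exact Or.inl h
        · rcases List.mem_cons.mp h with h' | h'
          · exact absurd h' hyx
          · exact Or.inr h'
    · exact (List.nodup_cons.mp hnd).2
    · intro y hy
      have hyx : y ≠ x := fun h => hxL' (h ▸ hy)
      rw [my_update_noteq _ _ _ _ hyx]
      exact hLn y (List.mem_cons_of_mem _ hy)
    · intro y hy
      exact hLb y (List.mem_cons_of_mem _ hy)

/-- If `G` is a complete multipartite graph, then every complete expansion `𝕂[G]` of `G`
is `k`-indicated colorable for every `k ≥ χ(𝕂[G])`. -/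
theorem completeExpansion_completeMultipartite_indicatedColorable
    {V : Type*} [Fintype V] (G : SimpleGraph V)
    (hG : ∃ (ι : Type) (p : V → ι), ∀ u v, G.Adj u v ↔ p u ≠ p v)
    (m : V → ℕ) (hm : ∀ v, 0 < m v) (k : ℕ)
    (hk : (completeExpansion G m).chromaticNumber ≤ k) :
    IndicatedColorable (completeExpansion G m) k := by
  obtain ⟨ι, p, hp⟩ := hG
  have hbest : ∀ j : ι, (∃ v, p v = j) → ∃ x, p x = j ∧ ∀ w, p w = j → m w ≤ m x := by
    intro j hj
    obtain ⟨v, hv⟩ := hj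
    obtain ⟨x, hxs, hmax⟩ := (Finset.univ.filter fun u => p u = j).exists_max_image m
      ⟨v, Finset.mem_filter.mpr ⟨Finset.mem_univ _, hv⟩⟩
    refine ⟨x, (Finset.mem_filter.mp hxs).2, fun w hw => hmax w ?_⟩
    exact Finset.mem_filter.mpr ⟨Finset.mem_univ _, hw⟩
  set b : V → V := fun v => Classical.choose (hbest (p v) ⟨v, rfl⟩) with hbdef
  have hb1 : ∀ v, p (b v) = p v := fun v => (Classical.choose_spec (hbest (p v) ⟨v, rfl⟩)).1
  have hb2 : ∀ v u, p u = p v → m u ≤ m (b v) := fun v u h =>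
    (Classical.choose_spec (hbest (p v) ⟨v, rfl⟩)).2 u h
  have key : ∀ j j', j = j' → ∀ (h1 : ∃ v, p v = j) (h2 : ∃ v, p v = j'),
      Classical.choose (hbest j h1) = Classical.choose (hbest j' h2) := by
    rintro j _ rfl h1 h2; rfl
  have hb3 : ∀ u v, p u = p v → b u = b v := fun u v h =>
    key (p u) (p v) h ⟨u, rfl⟩ ⟨v, rfl⟩
  have hcolk : (completeExpansion G m).Colorable k :=
    chromaticNumber_le_iff_colorable.mp hk
  obtain ⟨C⟩ := hcolk
  set chosen : Finset (Σ v, Fin (m v)) :=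
    Finset.univ.filter (fun y => y.1 = b y.1) with hchdef
  have hK : chosen.card ≤ k := by
    have : chosen.card ≤ (Finset.univ : Finset (Fin k)).card := by
      apply Finset.card_le_card_of_injOn C (fun _ _ => Finset.mem_univ _)
      intro y hy y' hy' hCe
      rw [Finset.mem_coe, hchdef, Finset.mem_filter] at hy hy'
      by_contra hne
      have hadj : (completeExpansion G m).Adj y y' := by
        by_cases h12 : y.1 = y'.1
        · exact Or.inr ⟨h12, hne⟩
        · refine Or.inl ((hp y.1 y'.1).mpr ?_)
          intro hpe
          exact h12 (hy.2.trans ((hb3 y.1 y'.1 hpe).trans hy'.2.symm))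
      exact C.valid hadj hCe
    rwa [Finset.card_univ, Fintype.card_fin] at this
  apply phase1 hp b hb1 hb2 hb3 hK chosen.toList
  · intro x y hadj a hx
    exact absurd hx (by simp)
  · intro x hx
    exact absurd hx (by simp)
  · intro x hx
    exact Or.inr (Finset.mem_toList.mpr (Finset.mem_filter.mpr ⟨Finset.mem_univ _, hx⟩))
  · exact Finset.nodup_toList chosen
  · intro x _; rfl
  · intro x hx
    exact (Finset.mem_filter.mp (Finset.mem_toList.mp hx)).2
end

section
/- Let H be a finite bipartite graph and let G be the complement of H. Then every complete expansion 𝕂[G] of G (with arbitrary positive clique sizes m_v) is k-indicated colorable for every integer k ≥ χ(𝕂[G]). -/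
open SimpleGraph
open scoped Classical

section IndicatedAux

private lemma fin2cases (i : Fin 2) : i = 0 ∨ i = 1 := by
  revert i; decide

variable {X Y : Type*} [DecidableEq X] [DecidableEq Y]

private lemma finset_biUnion_union (S T : Finset X) (ν : X → Finset Y) :
    (S ∪ T).biUnion ν = S.biUnion ν ∪ T.biUnion ν := by
  ext y
  simp only [Finset.mem_biUnion, Finset.mem_union]
  constructor
  · rintro ⟨x, hx | hx, hy⟩
    · exact Or.inl ⟨x, hx, hy⟩
    · exact Or.inr ⟨x, hx, hy⟩
  · rintro (⟨x, hx, hy⟩ | ⟨x, hx, hy⟩)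
    · exact ⟨x, Or.inl hx, hy⟩
    · exact ⟨x, Or.inr hx, hy⟩

private lemma hall_extract (ν : X → Finset Y) (U : Finset X)
    (hall : ∀ S ⊆ U, S.card ≤ (S.biUnion ν).card) (hU : U.Nonempty) :
    ∃ b ∈ U, ∀ col ∈ ν b, ∀ S ⊆ U.erase b,
      S.card ≤ ((S.biUnion ν).erase col).card := by
  classical
  set T : Finset (Finset X) :=
    U.powerset.filter (fun S => S.Nonempty ∧ (S.biUnion ν).card = S.card) with hTdef
  by_cases hTne : T.Nonempty
  · obtain ⟨S₀, hS₀T, hmin⟩ := T.exists_min_image Finset.card hTne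
    rw [hTdef, Finset.mem_filter, Finset.mem_powerset] at hS₀T
    obtain ⟨hS₀U, hS₀ne, hS₀t⟩ := hS₀T
    obtain ⟨b, hbS₀⟩ := hS₀ne
    refine ⟨b, hS₀U hbS₀, ?_⟩
    intro col hcol S hS
    by_contra hlt
    push_neg at hlt
    have hSU : S ⊆ U := hS.trans (Finset.erase_subset _ _)
    have h1 : S.card ≤ (S.biUnion ν).card := hall S hSU
    have hcolmem : col ∈ S.biUnion ν := by
      by_contra hc
      rw [Finset.erase_eq_of_notMem hc] at hlt; omega
    have hSt : (S.biUnion ν).card = S.card := by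
      have := Finset.card_erase_of_mem hcolmem; omega
    have hbS : b ∉ S := fun h => (Finset.mem_erase.mp (hS h)).1 rfl
    have h2 : (S ∪ S₀).card ≤ ((S ∪ S₀).biUnion ν).card :=
      hall _ (Finset.union_subset hSU hS₀U)
    have hNi : (S ∩ S₀).biUnion ν ⊆ S.biUnion ν ∩ S₀.biUnion ν := by
      intro y hy
      rw [Finset.mem_biUnion] at hy
      obtain ⟨x, hx, hyx⟩ := hy
      rw [Finset.mem_inter] at hx
      exact Finset.mem_inter.mpr
        ⟨Finset.mem_biUnion.mpr ⟨x, hx.1, hyx⟩, Finset.mem_biUnion.mpr ⟨x, hx.2, hyx⟩⟩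
    have h3 : (S ∩ S₀).card ≤ ((S ∩ S₀).biUnion ν).card :=
      hall _ ((Finset.inter_subset_left).trans hSU)
    have c2 : ((S ∩ S₀).biUnion ν).card ≤ (S.biUnion ν ∩ S₀.biUnion ν).card :=
      Finset.card_le_card hNi
    have c1 : (S ∪ S₀).card ≤ (S.biUnion ν ∪ S₀.biUnion ν).card := by
      rw [← finset_biUnion_union]; exact h2
    have e1 := Finset.card_union_add_card_inter S S₀
    have e2 := Finset.card_union_add_card_inter (S.biUnion ν) (S₀.biUnion ν)
    have keyb : ((S ∩ S₀).biUnion ν).card = (S ∩ S₀).card := by omega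
    have key : (S.biUnion ν ∩ S₀.biUnion ν).card = (S ∩ S₀).card := by omega
    rcases Finset.eq_empty_or_nonempty (S ∩ S₀) with hI | hIne
    · have hcolin : col ∈ S.biUnion ν ∩ S₀.biUnion ν :=
        Finset.mem_inter.mpr ⟨hcolmem, Finset.mem_biUnion.mpr ⟨b, hbS₀, hcol⟩⟩
      have hpos : 0 < (S.biUnion ν ∩ S₀.biUnion ν).card :=
        Finset.card_pos.mpr ⟨col, hcolin⟩
      rw [hI, Finset.card_empty] at key
      omega
    · have hmem : S ∩ S₀ ∈ T := by
        rw [hTdef, Finset.mem_filter, Finset.mem_powerset]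
        exact ⟨(Finset.inter_subset_right).trans hS₀U, hIne, keyb⟩
      have hle := hmin _ hmem
      have hss : S ∩ S₀ ⊂ S₀ :=
        (Finset.ssubset_iff_of_subset Finset.inter_subset_right).mpr
          ⟨b, hbS₀, fun h => hbS (Finset.mem_inter.mp h).1⟩
      have := Finset.card_lt_card hss
      omega
  · obtain ⟨b, hb⟩ := hU
    refine ⟨b, hb, ?_⟩
    intro col _ S hS
    rcases S.eq_empty_or_nonempty with rfl | hSne
    · simp
    have hSU : S ⊆ U := hS.trans (Finset.erase_subset _ _)
    have hnt : ¬((S.biUnion ν).card = S.card) := fun h =>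
      hTne ⟨S, by rw [hTdef, Finset.mem_filter, Finset.mem_powerset]; exact ⟨hSU, hSne, h⟩⟩
    have h1 := hall S hSU
    have h2 := Finset.pred_card_le_card_erase (s := S.biUnion ν) (a := col)
    omega

end IndicatedAux

section IndicatedGame

variable {W : Type*} [Fintype W] (G : SimpleGraph W) (k : ℕ) (φ : W → Fin 2)

private noncomputable def compatF (c : W → Option (Fin k)) (b : W) : Finset (Fin k) :=
  Finset.univ.filter (fun col => ∀ u, G.Adj u b → c u ≠ some col)

private lemma mem_compatF {c : W → Option (Fin k)} {b : W} {col : Fin k} :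
    col ∈ compatF G k c b ↔ ∀ u, G.Adj u b → c u ≠ some col := by
  simp [compatF]

private def ProperP (c : W → Option (Fin k)) : Prop :=
  ∀ x y col, G.Adj x y → c x = some col → c y ≠ some col

private def HallP (c : W → Option (Fin k)) : Prop :=
  ∀ S : Finset W, (∀ v ∈ S, φ v = 1 ∧ c v = none) →
    S.card ≤ (S.biUnion (compatF G k c)).card

private lemma hall_untouched (C : W → Fin k) (hC : ∀ x y, G.Adj x y → C x ≠ C y)
    (hφ : ∀ x y, φ x = φ y → x ≠ y → G.Adj x y)
    (c : W → Option (Fin k)) (hprop : ProperP G k c)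
    (hcolA : ∀ v, c v ≠ none → φ v = 0) :
    HallP G k φ c := by
  classical
  intro S hS
  rcases S.eq_empty_or_nonempty with rfl | hSne
  · simp
  obtain ⟨b₀, hb₀⟩ := hSne
  set N := S.biUnion (compatF G k c) with hN
  have huniq : ∀ u v col, c u = some col → c v = some col → u = v := by
    intro u v col hu hv
    by_contra hne
    have h0u : φ u = 0 := hcolA u (by simp [hu])
    have h0v : φ v = 0 := hcolA v (by simp [hv])
    exact hprop u v col (hφ u v (h0u.trans h0v.symm) hne) hu hv
  have hbadex : ∀ col ∈ Finset.univ \ N, ∀ b ∈ S, ∃ u, G.Adj u b ∧ c u = some col := by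
    intro col hcolb b hb
    rw [Finset.mem_sdiff] at hcolb
    have hnc : col ∉ compatF G k c b := fun h =>
      hcolb.2 (Finset.mem_biUnion.mpr ⟨b, hb, h⟩)
    rw [mem_compatF] at hnc
    push_neg at hnc
    exact hnc
  set w : Fin k → W :=
    fun col => if h : ∃ u, G.Adj u b₀ ∧ c u = some col then h.choose else b₀ with hw
  have hwspec : ∀ col ∈ Finset.univ \ N, c (w col) = some col := by
    intro col hcol
    have hex := hbadex col hcol b₀ hb₀
    rw [hw]
    simp only []
    rw [dif_pos hex]
    exact hex.choose_spec.2
  have hwadj : ∀ col ∈ Finset.univ \ N, ∀ b ∈ S, G.Adj (w col) b := by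
    intro col hcol b hb
    obtain ⟨u, hu1, hu2⟩ := hbadex col hcol b hb
    have heq := huniq u (w col) col hu2 (hwspec col hcol)
    rw [← heq]
    exact hu1
  set T := S ∪ (Finset.univ \ N).image w with hT
  have hadjT : ∀ x ∈ T, ∀ y ∈ T, x ≠ y → G.Adj x y := by
    intro x hx y hy hne
    rw [hT, Finset.mem_union] at hx hy
    rcases hx with hx | hx <;> rcases hy with hy | hy
    · exact hφ x y (((hS x hx).1).trans ((hS y hy).1).symm) hne
    · obtain ⟨col, hcol, rfl⟩ := Finset.mem_image.mp hy
      exact (hwadj col hcol x hx).symm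
    · obtain ⟨col, hcol, rfl⟩ := Finset.mem_image.mp hx
      exact hwadj col hcol y hy
    · obtain ⟨col, hcol, rfl⟩ := Finset.mem_image.mp hx
      obtain ⟨col', hcol', rfl⟩ := Finset.mem_image.mp hy
      have h1 := hwspec col hcol
      have h2 := hwspec col' hcol'
      exact hφ _ _ ((hcolA _ (by simp [h1])).trans (hcolA _ (by simp [h2])).symm) hne
  have hTk : T.card ≤ k := by
    have hinj : Set.InjOn C T := by
      intro x hx y hy hxy
      by_contra hne
      exact hC x y (hadjT x (Finset.mem_coe.mp hx) y (Finset.mem_coe.mp hy) hne) hxy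
    calc T.card ≤ Finset.univ.card :=
          Finset.card_le_card_of_injOn C (fun a _ => Finset.mem_univ _) hinj
      _ = k := by simp
  have hdisj : Disjoint S ((Finset.univ \ N).image w) := by
    rw [Finset.disjoint_left]
    intro v hvS hvI
    obtain ⟨col, hcol, heq⟩ := Finset.mem_image.mp hvI
    have hspec := hwspec col hcol
    rw [heq, (hS v hvS).2] at hspec
    exact absurd hspec (by simp)
  have hwinj : Set.InjOn w ↑(Finset.univ \ N) := by
    intro a ha b hb hab
    have h1 := hwspec a (Finset.mem_coe.mp ha)
    have h2 := hwspec b (Finset.mem_coe.mp hb)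
    rw [hab, h2] at h1
    exact (Option.some.inj h1).symm
  have hcardT : T.card = S.card + (Finset.univ \ N).card := by
    rw [hT, Finset.card_union_of_disjoint hdisj, Finset.card_image_of_injOn hwinj]
  have hNk : (Finset.univ \ N).card + N.card = k := by
    rw [Finset.card_sdiff_add_card_eq_card (Finset.subset_univ N)]
    simp
  omega

private lemma proper_update_s11 (c : W → Option (Fin k)) (v : W) (col : Fin k)
    (hprop : ProperP G k c) (hcol : ∀ u, G.Adj u v → c u ≠ some col) :
    ProperP G k (Function.update c v (some col)) := by
  intro x y col' hadj hx
  rcases eq_or_ne y v with rfl | hyv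
  · rcases eq_or_ne x y with rfl | hxy
    · exact absurd hadj (G.loopless.irrefl _)
    · rw [Function.update_of_ne hxy] at hx
      rw [Function.update_self]
      intro h
      obtain rfl := Option.some.inj h
      exact hcol x hadj hx
  · rw [Function.update_of_ne hyv]
    rcases eq_or_ne x v with rfl | hxv
    · rw [Function.update_self] at hx
      obtain rfl := Option.some.inj hx
      exact hcol y hadj.symm
    · rw [Function.update_of_ne hxv] at hx
      exact hprop x y col' hadj hx

private lemma annWins_aux (C : W → Fin k) (hC : ∀ x y, G.Adj x y → C x ≠ C y)
    (hφ : ∀ x y, φ x = φ y → x ≠ y → G.Adj x y) :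
    ∀ n (c : W → Option (Fin k)),
      (Finset.univ.filter (fun v => c v = none)).card ≤ n →
      ProperP G k c →
      ((∃ a, φ a = 0 ∧ c a = none) → ∀ b, φ b = 1 → c b = none) →
      HallP G k φ c → AnnWins G k c := by
  classical
  intro n
  induction n with
  | zero =>
    intro c hcard _ _ _
    refine AnnWins.done c ?_
    intro v
    cases hv : c v with
    | none =>
      exfalso
      have hmem : v ∈ Finset.univ.filter (fun v => c v = none) := by simp [hv]
      have := Finset.card_pos.mpr ⟨v, hmem⟩
      omega
    | some a => simp
  | succ n ih =>
    intro c hcard hprop hphase hhall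
    by_cases hdone : ∀ v, (c v).isSome
    · exact AnnWins.done c hdone
    push_neg at hdone
    obtain ⟨v₀, hv₀'⟩ := hdone
    have hv₀ : c v₀ = none := by
      cases hcv : c v₀ with
      | none => rfl
      | some a => rw [hcv] at hv₀'; simp at hv₀'
    have hdec : ∀ (v : W) (col : Fin k), c v = none →
        (Finset.univ.filter (fun u => Function.update c v (some col) u = none)).card ≤ n := by
      intro v col hv
      have hss : Finset.univ.filter (fun u => Function.update c v (some col) u = none) ⊂
          Finset.univ.filter (fun u => c u = none) := by
        rw [Finset.ssubset_def]
        constructor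
        · intro u hu
          rw [Finset.mem_filter] at hu ⊢
          refine ⟨Finset.mem_univ u, ?_⟩
          rcases eq_or_ne u v with rfl | hne
          · rw [Function.update_self] at hu
            exact absurd hu.2 (by simp)
          · have := hu.2
            rwa [Function.update_of_ne hne] at this
        · intro hsub
          have hv' : v ∈ Finset.univ.filter (fun u => c u = none) := by simp [hv]
          have := hsub hv'
          rw [Finset.mem_filter, Function.update_self] at this
          exact absurd this.2 (by simp)
      have := Finset.card_lt_card hss
      omega
    by_cases hA : ∃ a, φ a = 0 ∧ c a = none
    · obtain ⟨a₀, ha₀φ, ha₀⟩ := hA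
      have hcolA : ∀ v, c v ≠ none → φ v = 0 := by
        intro v hv
        rcases fin2cases (φ v) with h | h
        · exact h
        · exact absurd (hphase ⟨a₀, ha₀φ, ha₀⟩ v h) hv
      have hex : ∃ col : Fin k, ∀ u, c u ≠ some col := by
        set Col := Finset.univ.filter (fun v => c v ≠ none) with hColdef
        set A := Finset.univ.filter (fun v => φ v = 0) with hAdef
        have hsub : Col ⊂ A := by
          rw [Finset.ssubset_def]
          constructor
          · intro u hu
            rw [hColdef, Finset.mem_filter] at hu
            rw [hAdef, Finset.mem_filter]
            exact ⟨hu.1, hcolA u hu.2⟩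
          · intro hsub2
            have hmem : a₀ ∈ A := by
              rw [hAdef, Finset.mem_filter]
              exact ⟨Finset.mem_univ _, ha₀φ⟩
            have := hsub2 hmem
            rw [hColdef, Finset.mem_filter] at this
            exact this.2 ha₀
        have hAk : A.card ≤ k := by
          have hinj : Set.InjOn C A := by
            intro x hx y hy hxy
            by_contra hne
            rw [Finset.mem_coe, hAdef, Finset.mem_filter] at hx hy
            exact hC x y (hφ x y (hx.2.trans hy.2.symm) hne) hxy
          calc A.card ≤ Finset.univ.card :=
                Finset.card_le_card_of_injOn C (fun a _ => Finset.mem_univ _) hinj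
            _ = k := by simp
        set Used := Finset.univ.filter (fun col : Fin k => ∃ u, c u = some col) with hUseddef
        set w : Fin k → W := fun col => if h : ∃ u, c u = some col then h.choose else a₀ with hwdef
        have hwspec : ∀ col ∈ Used, c (w col) = some col := by
          intro col hcol
          rw [hUseddef, Finset.mem_filter] at hcol
          rw [hwdef]
          simp only []
          rw [dif_pos hcol.2]
          exact hcol.2.choose_spec
        have hUC : Used.card ≤ Col.card := by
          apply Finset.card_le_card_of_injOn w
          · intro col hcol
            rw [hColdef, Finset.mem_coe, Finset.mem_filter]
            refine ⟨Finset.mem_univ _, ?_⟩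
            rw [hwspec col hcol]
            simp
          · intro a ha b hb hab
            have h1 := hwspec a (Finset.mem_coe.mp ha)
            have h2 := hwspec b (Finset.mem_coe.mp hb)
            rw [hab, h2] at h1
            exact (Option.some.inj h1).symm
        have hClt : Col.card < A.card := Finset.card_lt_card hsub
        have hexcol : ∃ col : Fin k, col ∉ Used := by
          by_contra hcon
          push_neg at hcon
          have hsub3 : (Finset.univ : Finset (Fin k)) ⊆ Used := fun col _ => hcon col
          have := Finset.card_le_card hsub3
          simp only [Finset.card_univ, Fintype.card_fin] at this
          omega
        obtain ⟨col, hcol⟩ := hexcol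
        refine ⟨col, fun u hu => hcol ?_⟩
        rw [hUseddef, Finset.mem_filter]
        exact ⟨Finset.mem_univ _, ⟨u, hu⟩⟩
      obtain ⟨col₀, hcol₀⟩ := hex
      refine AnnWins.step c a₀ ha₀ ⟨col₀, fun u _ => hcol₀ u⟩ ?_
      intro col hcol
      refine ih _ (hdec a₀ col ha₀) (proper_update_s11 G k c a₀ col hprop hcol) ?_ ?_
      · rintro ⟨a, haφ, hanone⟩ b hbφ
        have hba : b ≠ a₀ := by
          intro h
          rw [h, ha₀φ] at hbφ
          exact absurd hbφ (by decide)
        rw [Function.update_of_ne hba]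
        exact hphase ⟨a₀, ha₀φ, ha₀⟩ b hbφ
      · apply hall_untouched G k φ C hC hφ _ (proper_update_s11 G k c a₀ col hprop hcol)
        intro v hv
        rcases eq_or_ne v a₀ with rfl | hne
        · exact ha₀φ
        · rw [Function.update_of_ne hne] at hv
          exact hcolA v hv
    · have hBside : ∀ v, c v = none → φ v = 1 := by
        intro v hv
        rcases fin2cases (φ v) with h | h
        · exact absurd ⟨v, h, hv⟩ hA
        · exact h
      set U := Finset.univ.filter (fun v => c v = none) with hUdef
      have hUne : U.Nonempty := ⟨v₀, by rw [hUdef, Finset.mem_filter]; exact ⟨Finset.mem_univ _, hv₀⟩⟩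
      have hallU : ∀ S ⊆ U, S.card ≤ (S.biUnion (compatF G k c)).card := by
        intro S hSU
        apply hhall
        intro v hv
        have hvU := hSU hv
        rw [hUdef, Finset.mem_filter] at hvU
        exact ⟨hBside v hvU.2, hvU.2⟩
      obtain ⟨b, hbU, hkey⟩ := hall_extract (compatF G k c) U hallU hUne
      have hbnone : c b = none := by
        rw [hUdef, Finset.mem_filter] at hbU
        exact hbU.2
      have hbcompat : ∃ col, col ∈ compatF G k c b := by
        have h1 := hallU {b} (by
          intro x hx
          rw [Finset.mem_singleton] at hx
          rw [hx]
          exact hbU)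
        rw [Finset.singleton_biUnion, Finset.card_singleton] at h1
        obtain ⟨col, hcol⟩ := Finset.card_pos.mp h1
        exact ⟨col, hcol⟩
      refine AnnWins.step c b hbnone ?_ ?_
      · obtain ⟨col, hcol⟩ := hbcompat
        exact ⟨col, (mem_compatF G k).mp hcol⟩
      intro col hcol
      have hcolmem : col ∈ compatF G k c b := (mem_compatF G k).mpr hcol
      refine ih _ (hdec b col hbnone) (proper_update_s11 G k c b col hprop hcol) ?_ ?_
      · rintro ⟨a, haφ, hanone⟩ b' hb'
        exfalso
        have hca : c a = none := by
          rcases eq_or_ne a b with rfl | hne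
          · rw [Function.update_self] at hanone
            exact absurd hanone (by simp)
          · rwa [Function.update_of_ne hne] at hanone
        exact hA ⟨a, haφ, hca⟩
      · intro S hS
        have hSsub : S ⊆ U.erase b := by
          intro v hv
          obtain ⟨hvφ, hvnone⟩ := hS v hv
          have hvb : v ≠ b := by
            intro h
            rw [h, Function.update_self] at hvnone
            exact absurd hvnone (by simp)
          rw [Function.update_of_ne hvb] at hvnone
          rw [Finset.mem_erase]
          refine ⟨hvb, ?_⟩
          rw [hUdef, Finset.mem_filter]
          exact ⟨Finset.mem_univ _, hvnone⟩
        refine (hkey col hcolmem S hSsub).trans (Finset.card_le_card ?_)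
        intro x hx
        rw [Finset.mem_erase] at hx
        obtain ⟨hxcol, hxmem⟩ := hx
        rw [Finset.mem_biUnion] at hxmem ⊢
        obtain ⟨v, hvS, hxv⟩ := hxmem
        refine ⟨v, hvS, ?_⟩
        rw [mem_compatF] at hxv ⊢
        intro u hu
        rcases eq_or_ne u b with rfl | hne
        · rw [Function.update_self]
          intro h
          exact hxcol (Option.some.inj h).symm
        · rw [Function.update_of_ne hne]
          exact hxv u hu

private lemma main_game (C : W → Fin k) (hC : ∀ x y, G.Adj x y → C x ≠ C y)
    (hφ : ∀ x y, φ x = φ y → x ≠ y → G.Adj x y) :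
    IndicatedColorable G k := by
  have hprop : ProperP G k (fun _ => (none : Option (Fin k))) := by
    intro x y col _ hx
    exact absurd hx (by simp)
  refine annWins_aux G k φ C hC hφ (Fintype.card W) _ ?_ hprop ?_ ?_
  · calc (Finset.univ.filter (fun v => (none : Option (Fin k)) = none)).card
        ≤ Finset.univ.card := Finset.card_filter_le _ _
    _ = Fintype.card W := Finset.card_univ
  · intro _ b _
    rfl
  · apply hall_untouched G k φ C hC hφ _ hprop
    intro v hv
    exact absurd rfl hv

end IndicatedGame

/-- If `G` is the complement of a bipartite graph, then every complete expansion `𝕂[G]`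
of `G` is `k`-indicated colorable for every `k ≥ χ(𝕂[G])`. -/
theorem completeExpansion_complBipartite_indicatedColorable
    {V : Type*} [Fintype V] (H : SimpleGraph V) (hH : H.Colorable 2)
    (m : V → ℕ) (hm : ∀ v, 0 < m v) (k : ℕ)
    (hk : (completeExpansion Hᶜ m).chromaticNumber ≤ k) :
    IndicatedColorable (completeExpansion Hᶜ m) k := by
  obtain ⟨Cc⟩ := (SimpleGraph.chromaticNumber_le_iff_colorable).mp hk
  obtain ⟨ψ⟩ := hH
  refine main_game (completeExpansion Hᶜ m) k (fun x => ψ x.1) Cc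
    (fun x y h => Cc.valid h) ?_
  intro x y hxy hne
  show Hᶜ.Adj x.1 y.1 ∨ (x.1 = y.1 ∧ x ≠ y)
  by_cases h1 : x.1 = y.1
  · exact Or.inr ⟨h1, hne⟩
  · exact Or.inl ((SimpleGraph.compl_adj H x.1 y.1).mpr
      ⟨h1, fun hadj => ψ.valid hadj hxy⟩)
end

section
/- Let G be a finite complete multipartite graph and let H be a finite nonempty bipartite graph. Then the lexicographic product G[H] is k-indicated colorable for every integer k ≥ χ(G[H]). -/
open SimpleGraph
open scoped Classical

namespace IndicatedLexAux

open Function Finset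


theorem upd_self {γ : Type*} {δ : Sort*} {i : DecidableEq γ} (f : γ → δ) (a : γ) (b : δ) :
    @Function.update γ (fun _ => δ) i f a b a = b :=
  @Function.update_self γ (fun _ => δ) i a b f

theorem upd_other {γ : Type*} {δ : Sort*} {i : DecidableEq γ} {a a' : γ} (h : a ≠ a')
    (b : δ) (f : γ → δ) : @Function.update γ (fun _ => δ) i f a' b a = f a :=
  @Function.update_of_ne γ (fun _ => δ) i a a' h b f

variable {α β : Type*} {ι : Type}

/-- `d` is a colour appearing in the (coloured) neighbourhood of `v`. -/
def Sees (L : SimpleGraph (α × β)) {k : ℕ} (c : α × β → Option (Fin k))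
    (v : α × β) (d : Fin k) : Prop :=
  ∃ u, L.Adj u v ∧ c u = some d

/-- The partial colouring is proper. -/
def Proper (L : SimpleGraph (α × β)) {k : ℕ} (c : α × β → Option (Fin k)) : Prop :=
  ∀ v w (d : Fin k), L.Adj v w → c v = some d → c w ≠ some d

/-- Part of `a` has an uncoloured vertex on side `s`. -/
def UncS (p : α → ι) (σ : β → Bool) {k : ℕ} (c : α × β → Option (Fin k))
    (a : α) (s : Bool) : Prop :=
  ∃ v : α × β, p v.1 = p a ∧ σ v.2 = s ∧ c v = none

/-- `d` is an anchored colour for side `s` of the part of `a`: it is used in that part,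
and no uncoloured side-`s` vertex of the part sees it. -/
def Anc (L : SimpleGraph (α × β)) (p : α → ι) (σ : β → Bool) {k : ℕ}
    (c : α × β → Option (Fin k)) (a : α) (s : Bool) (d : Fin k) : Prop :=
  (∃ w : α × β, p w.1 = p a ∧ c w = some d) ∧
  ∀ v : α × β, p v.1 = p a → σ v.2 = s → c v = none → ¬ Sees L c v d

/-- The master invariant. -/
def Inv (L : SimpleGraph (α × β)) (p : α → ι) (σ : β → Bool) {k : ℕ}
    (c : α × β → Option (Fin k)) : Prop :=
  ∀ (a : α) (s : Bool),
    (UncS p σ c a s → ∃ d, Anc L p σ c a s d) ∧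
    (UncS p σ c a s → UncS p σ c a (!s) →
      ∃ d e, d ≠ e ∧ Anc L p σ c a s d ∧ Anc L p σ c a (!s) e)

section Lemmas

variable {L : SimpleGraph (α × β)} {H : SimpleGraph β} {p : α → ι} {σ : β → Bool} {k : ℕ}
variable {c c' : α × β → Option (Fin k)} {v : α × β} {col : Fin k}

lemma upd_eq_none (h'v : c' v = some col) (h'o : ∀ u, u ≠ v → c' u = c u)
    {u : α × β} (h : c' u = none) : c u = none ∧ u ≠ v := by
  by_cases hu : u = v
  · subst hu; rw [h'v] at h; cases h
  · rw [h'o u hu] at h; exact ⟨h, hu⟩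

lemma upd_eq_some (h'v : c' v = some col) (h'o : ∀ u, u ≠ v → c' u = c u)
    {u : α × β} {d : Fin k} (h : c' u = some d) :
    (u = v ∧ col = d) ∨ (u ≠ v ∧ c u = some d) := by
  by_cases hu : u = v
  · subst hu; rw [h'v] at h
    exact Or.inl ⟨rfl, by injection h⟩
  · rw [h'o u hu] at h; exact Or.inr ⟨hu, h⟩

lemma unc_mono (h'v : c' v = some col) (h'o : ∀ u, u ≠ v → c' u = c u) {a : α} {s : Bool}
    (h : UncS p σ c' a s) : UncS p σ c a s := by
  obtain ⟨u, h1, h2, h3⟩ := h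
  exact ⟨u, h1, h2, (upd_eq_none h'v h'o h3).1⟩

/-- An anchor survives any move with a different colour. -/
lemma pres_ne (hv : c v = none) (h'v : c' v = some col) (h'o : ∀ u, u ≠ v → c' u = c u)
    {d : Fin k} {a : α} {s : Bool}
    (hcol : col ≠ d) (hA : Anc L p σ c a s d) : Anc L p σ c' a s d := by
  obtain ⟨⟨w, hw1, hw2⟩, h2⟩ := hA
  have hwv : w ≠ v := by rintro rfl; rw [hv] at hw2; cases hw2
  refine ⟨⟨w, hw1, by rw [h'o w hwv]; exact hw2⟩, ?_⟩
  rintro u hu1 hu2 hu3 ⟨w', hadj, hw'⟩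
  obtain ⟨hu3', -⟩ := upd_eq_none h'v h'o hu3
  rcases upd_eq_some h'v h'o hw' with ⟨rfl, rfl⟩ | ⟨-, hold⟩
  · exact hcol rfl
  · exact h2 u hu1 hu2 hu3' ⟨w', hadj, hold⟩

/-- An anchor for side `s` survives any move made at a same-part vertex of side `s`. -/
lemma pres_same (hL : ∀ v w : α × β, L.Adj v w ↔ (p v.1 ≠ p w.1 ∨ (v.1 = w.1 ∧ H.Adj v.2 w.2)))
    (hσ : ∀ y y' : β, H.Adj y y' → σ y ≠ σ y')
    (hv : c v = none) (h'v : c' v = some col) (h'o : ∀ u, u ≠ v → c' u = c u)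
    {d : Fin k} {a : α} {s : Bool}
    (hpv : p v.1 = p a) (hsv : σ v.2 = s) (hA : Anc L p σ c a s d) :
    Anc L p σ c' a s d := by
  obtain ⟨⟨w, hw1, hw2⟩, h2⟩ := hA
  have hwv : w ≠ v := by rintro rfl; rw [hv] at hw2; cases hw2
  refine ⟨⟨w, hw1, by rw [h'o w hwv]; exact hw2⟩, ?_⟩
  rintro u hu1 hu2 hu3 ⟨w', hadj, hw'⟩
  obtain ⟨hu3', -⟩ := upd_eq_none h'v h'o hu3
  rcases upd_eq_some h'v h'o hw' with ⟨rfl, -⟩ | ⟨-, hold⟩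
  · rcases (hL w' u).mp hadj with hpp | ⟨-, hHadj⟩
    · exact hpp (hpv.trans hu1.symm)
    · exact hσ _ _ hHadj (hsv.trans hu2.symm)
  · exact h2 u hu1 hu2 hu3' ⟨w', hadj, hold⟩

/-- A legal move in another part has a colour different from any colour used in this part. -/
lemma col_ne_of_cross (hL : ∀ v w : α × β, L.Adj v w ↔ (p v.1 ≠ p w.1 ∨ (v.1 = w.1 ∧ H.Adj v.2 w.2)))
    {d : Fin k} {a : α} {s : Bool}
    (hleg : ∀ u, L.Adj u v → c u ≠ some col) (hpv : p v.1 ≠ p a)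
    (hA : Anc L p σ c a s d) : col ≠ d := by
  obtain ⟨⟨w, hw1, hw2⟩, -⟩ := hA
  rintro rfl
  exact hleg w ((hL w v).mpr (Or.inl (by rw [hw1]; exact fun h => hpv h.symm))) hw2

lemma unc_congr {a a' : α} (h : p a = p a') {s : Bool} :
    UncS p σ c a s ↔ UncS p σ c a' s := by
  unfold UncS; simp only [h]

lemma anc_congr {a a' : α} (h : p a = p a') {s : Bool} {d : Fin k} :
    Anc L p σ c a s d ↔ Anc L p σ c a' s d := by
  unfold Anc; simp only [h]

/-- If the same-part conditions after the move are supplied, the invariant is preserved. -/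
lemma inv_update (hL : ∀ v w : α × β, L.Adj v w ↔ (p v.1 ≠ p w.1 ∨ (v.1 = w.1 ∧ H.Adj v.2 w.2)))
    (hv : c v = none) (h'v : c' v = some col) (h'o : ∀ u, u ≠ v → c' u = c u)
    (hleg : ∀ u, L.Adj u v → c u ≠ some col)
    (hInv : Inv L p σ c) {a₀ : α} (hva : p v.1 = p a₀)
    (hsame : ∀ s : Bool,
      (UncS p σ c' a₀ s → ∃ d, Anc L p σ c' a₀ s d) ∧
      (UncS p σ c' a₀ s → UncS p σ c' a₀ (!s) →
        ∃ d e, d ≠ e ∧ Anc L p σ c' a₀ s d ∧ Anc L p σ c' a₀ (!s) e)) :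
    Inv L p σ c' := by
  intro a s
  by_cases hpa : p a₀ = p a
  · constructor
    · intro h1
      obtain ⟨d, hd⟩ := (hsame s).1 ((unc_congr hpa).mpr h1)
      exact ⟨d, (anc_congr hpa).mp hd⟩
    · intro h1 h2
      obtain ⟨d, e, hde, hd, he⟩ := (hsame s).2 ((unc_congr hpa).mpr h1) ((unc_congr hpa).mpr h2)
      exact ⟨d, e, hde, (anc_congr hpa).mp hd, (anc_congr hpa).mp he⟩
  · have hcross : p v.1 ≠ p a := by rw [hva]; exact hpa
    constructor
    · intro h1
      obtain ⟨d, hd⟩ := (hInv a s).1 (unc_mono h'v h'o h1)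
      exact ⟨d, pres_ne hv h'v h'o (col_ne_of_cross hL hleg hcross hd) hd⟩
    · intro h1 h2
      obtain ⟨d, e, hde, hd, he⟩ := (hInv a s).2 (unc_mono h'v h'o h1) (unc_mono h'v h'o h2)
      exact ⟨d, e, hde, pres_ne hv h'v h'o (col_ne_of_cross hL hleg hcross hd) hd,
        pres_ne hv h'v h'o (col_ne_of_cross hL hleg hcross he) he⟩

/-- Packaging two anchors on opposite sides into the same-part conditions. -/
lemma mk_pair {a₀ : α} {t : Bool} {D E : Fin k}
    (hDE : D ≠ E) (hx : Anc L p σ c a₀ t D) (hy : Anc L p σ c a₀ (!t) E) :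
    ∀ s : Bool, (UncS p σ c a₀ s → ∃ d, Anc L p σ c a₀ s d) ∧
      (UncS p σ c a₀ s → UncS p σ c a₀ (!s) →
        ∃ d e, d ≠ e ∧ Anc L p σ c a₀ s d ∧ Anc L p σ c a₀ (!s) e) := by
  intro s
  by_cases hst : s = t
  · subst hst; exact ⟨fun _ => ⟨D, hx⟩, fun _ _ => ⟨D, E, hDE, hx, hy⟩⟩
  · have hst' : s = !t := by cases s <;> cases t <;> simp_all
    subst hst'
    have hnn : (!!t) = t := Bool.not_not t
    refine ⟨fun _ => ⟨E, hy⟩, fun _ _ => ⟨E, D, Ne.symm hDE, hy, ?_⟩⟩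
    rw [hnn]; exact hx

lemma card_unc_update_le [Fintype α] [Fintype β]
    (hv : c v = none) (h'v : c' v = some col) (h'o : ∀ u, u ≠ v → c' u = c u) {n : ℕ}
    (h : (Finset.univ.filter fun u => c u = none).card ≤ n + 1) :
    (Finset.univ.filter fun u => c' u = none).card ≤ n := by
  classical
  have hvmem : v ∈ Finset.univ.filter fun u => c u = none := by simp [hv]
  have hsub : (Finset.univ.filter fun u => c' u = none) ⊆
      (Finset.univ.filter fun u => c u = none).erase v := by
    intro u hu
    rw [mem_filter] at hu
    obtain ⟨h1, h2⟩ := upd_eq_none h'v h'o hu.2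
    exact Finset.mem_erase.mpr ⟨h2, by simp [h1]⟩
  have h1 := Finset.card_le_card hsub
  have h2 := Finset.card_erase_of_mem hvmem
  omega

end Lemmas

end IndicatedLexAux

namespace IndicatedLexAux

section Phase2

open Function Finset

variable {α β : Type*} {ι : Type} [Fintype α] [Fintype β]
variable {L : SimpleGraph (α × β)} {H : SimpleGraph β} {p : α → ι} {σ : β → Bool} {k : ℕ}

set_option maxHeartbeats 1000000 in
lemma phase2 (hL : ∀ v w : α × β, L.Adj v w ↔ (p v.1 ≠ p w.1 ∨ (v.1 = w.1 ∧ H.Adj v.2 w.2)))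
    (hσ : ∀ y y' : β, H.Adj y y' → σ y ≠ σ y') :
    ∀ (n : ℕ) (c : α × β → Option (Fin k)),
      (Finset.univ.filter fun u => c u = none).card ≤ n →
      Inv L p σ c → AnnWins L k c := by
  intro n
  induction n with
  | zero =>
    intro c hcard _
    refine AnnWins.done c fun v => ?_
    rw [Option.isSome_iff_ne_none]
    intro hv
    have hmem : v ∈ Finset.univ.filter fun u => c u = none := by simp [hv]
    have := Finset.card_pos.mpr ⟨v, hmem⟩
    omega
  | succ n ih =>
    intro c hcard hInv
    by_cases hdone : ∀ v, (c v).isSome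
    · exact AnnWins.done c hdone
    push_neg at hdone
    obtain ⟨v₀, hv₀⟩ := hdone
    replace hv₀ : c v₀ = none := by simpa [Option.isSome_iff_ne_none] using hv₀
    have hs0 : UncS p σ c v₀.1 (σ v₀.2) := ⟨v₀, rfl, rfl, hv₀⟩
    by_cases ho : UncS p σ c v₀.1 (!(σ v₀.2))
    · -- both sides of the part of v₀ have uncoloured vertices
      obtain ⟨d, e, hde, hAd, hAe⟩ := (hInv v₀.1 (σ v₀.2)).2 hs0 ho
      by_cases hP : ∃ u, ∃ g : Fin k, p u.1 = p v₀.1 ∧ σ u.2 = !(σ v₀.2) ∧ c u = none ∧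
          Anc L p σ c v₀.1 (σ v₀.2) g ∧ g ≠ e ∧ Sees L c u g
      · obtain ⟨u, g, hu1, hu2, hu3, hAg, hge, hSg⟩ := hP
        refine AnnWins.step c u hu3 ⟨e, fun w hw hc => hAe.2 u hu1 hu2 hu3 ⟨w, hw, hc⟩⟩ ?_
        intro col hcol
        have hcolg : col ≠ g := by
          obtain ⟨w, hw1, hw2⟩ := hSg
          rintro rfl; exact hcol w hw1 hw2
        refine ih _ ?_ ?_
        · exact card_unc_update_le hu3 (upd_self _ _ _)
            (fun w hw => upd_other hw _ _) hcard
        · refine inv_update hL hu3 (upd_self _ _ _)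
            (fun w hw => upd_other hw _ _) hcol hInv hu1 ?_
          exact mk_pair hge
            (pres_ne hu3 (upd_self _ _ _)
              (fun w hw => upd_other hw _ _) hcolg hAg)
            (pres_same hL hσ hu3 (upd_self _ _ _)
              (fun w hw => upd_other hw _ _) hu1 hu2 hAe)
      · by_cases hQ : ∃ u, ∃ g : Fin k, p u.1 = p v₀.1 ∧ σ u.2 = σ v₀.2 ∧ c u = none ∧
            Anc L p σ c v₀.1 (!(σ v₀.2)) g ∧ g ≠ d ∧ Sees L c u g
        · obtain ⟨u, g, hu1, hu2, hu3, hAg, hgd, hSg⟩ := hQ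
          refine AnnWins.step c u hu3 ⟨d, fun w hw hc => hAd.2 u hu1 hu2 hu3 ⟨w, hw, hc⟩⟩ ?_
          intro col hcol
          have hcolg : col ≠ g := by
            obtain ⟨w, hw1, hw2⟩ := hSg
            rintro rfl; exact hcol w hw1 hw2
          refine ih _ ?_ ?_
          · exact card_unc_update_le hu3 (upd_self _ _ _)
              (fun w hw => upd_other hw _ _) hcard
          · refine inv_update hL hu3 (upd_self _ _ _)
              (fun w hw => upd_other hw _ _) hcol hInv hu1 ?_
            exact mk_pair (Ne.symm hgd)
              (pres_same hL hσ hu3 (upd_self _ _ _)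
                (fun w hw => upd_other hw _ _) hu1 hu2 hAd)
              (pres_ne hu3 (upd_self _ _ _)
                (fun w hw => upd_other hw _ _) hcolg hAg)
        · -- neither: then d and e are anchors on both sides
          have hAe' : Anc L p σ c v₀.1 (σ v₀.2) e := by
            refine ⟨hAe.1, ?_⟩
            intro u hu1 hu2 hu3 hS
            exact hQ ⟨u, e, hu1, hu2, hu3, hAe, Ne.symm hde, hS⟩
          have hAd' : Anc L p σ c v₀.1 (!(σ v₀.2)) d := by
            refine ⟨hAd.1, ?_⟩
            intro u hu1 hu2 hu3 hS
            exact hP ⟨u, d, hu1, hu2, hu3, hAd, hde, hS⟩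
          refine AnnWins.step c v₀ hv₀ ⟨d, fun w hw hc => hAd.2 v₀ rfl rfl hv₀ ⟨w, hw, hc⟩⟩ ?_
          intro col hcol
          refine ih _ ?_ ?_
          · exact card_unc_update_le hv₀ (upd_self _ _ _)
              (fun w hw => upd_other hw _ _) hcard
          · refine inv_update hL hv₀ (upd_self _ _ _)
              (fun w hw => upd_other hw _ _) hcol hInv rfl ?_
            by_cases hce : col = e
            · have hcd : col ≠ d := by rw [hce]; exact Ne.symm hde
              exact mk_pair (Ne.symm hde)
                (pres_same hL hσ hv₀ (upd_self _ _ _)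
                  (fun w hw => upd_other hw _ _) rfl rfl hAe')
                (pres_ne hv₀ (upd_self _ _ _)
                  (fun w hw => upd_other hw _ _) hcd hAd')
            · exact mk_pair hde
                (pres_same hL hσ hv₀ (upd_self _ _ _)
                  (fun w hw => upd_other hw _ _) rfl rfl hAd)
                (pres_ne hv₀ (upd_self _ _ _)
                  (fun w hw => upd_other hw _ _) hce hAe)
    · -- only side (σ v₀.2) of the part of v₀ has uncoloured vertices
      obtain ⟨d, hAd⟩ := (hInv v₀.1 (σ v₀.2)).1 hs0
      refine AnnWins.step c v₀ hv₀ ⟨d, fun w hw hc => hAd.2 v₀ rfl rfl hv₀ ⟨w, hw, hc⟩⟩ ?_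
      intro col hcol
      refine ih _ ?_ ?_
      · exact card_unc_update_le hv₀ (upd_self _ _ _)
          (fun w hw => upd_other hw _ _) hcard
      · refine inv_update hL hv₀ (upd_self _ _ _)
          (fun w hw => upd_other hw _ _) hcol hInv rfl ?_
        intro s
        by_cases hss : s = σ v₀.2
        · subst hss
          refine ⟨fun _ => ⟨d, pres_same hL hσ hv₀ (upd_self _ _ _)
              (fun w hw => upd_other hw _ _) rfl rfl hAd⟩,
            fun _ h2 => absurd (unc_mono (upd_self _ _ _)
              (fun w hw => upd_other hw _ _) h2) ho⟩
        · have hs' : s = !(σ v₀.2) := by cases s <;> cases hsv : σ v₀.2 <;> simp_all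
          subst hs'
          refine ⟨fun h1 => absurd (unc_mono (upd_self _ _ _)
              (fun w hw => upd_other hw _ _) h1) ho,
            fun h1 _ => absurd (unc_mono (upd_self _ _ _)
              (fun w hw => upd_other hw _ _) h1) ho⟩

end Phase2

end IndicatedLexAux

namespace IndicatedLexAux

section Phase1

open Function Finset

variable {α β : Type*} {ι : Type} [Fintype α] [Fintype β]
variable {L : SimpleGraph (α × β)} {H : SimpleGraph β} {p : α → ι} {σ : β → Bool} {k : ℕ}
variable {rep : α → α} {xs ys : β}

/-- Anchor slots: one (or two, when side `true` is inhabited) distinguished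
vertices in each part. -/
def IsSlot (rep : α → α) (σ : β → Bool) (xs ys : β) (v : α × β) : Prop :=
  v.1 = rep v.1 ∧ (v.2 = xs ∨ (σ ys = true ∧ v.2 = ys))

omit [Fintype α] [Fintype β] in
lemma slots_adj (hL : ∀ v w : α × β, L.Adj v w ↔ (p v.1 ≠ p w.1 ∨ (v.1 = w.1 ∧ H.Adj v.2 w.2)))
    (hrep2 : ∀ a a', p a = p a' → rep a = rep a') (hxy : σ ys = true → H.Adj xs ys)
    {v w : α × β} (hv : IsSlot rep σ xs ys v) (hw : IsSlot rep σ xs ys w) (hne : v ≠ w) :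
    L.Adj v w := by
  obtain ⟨hv1, hv2⟩ := hv
  obtain ⟨hw1, hw2⟩ := hw
  rw [hL]
  by_cases hp : p v.1 = p w.1
  · have h11 : v.1 = w.1 := hv1.trans ((hrep2 _ _ hp).trans hw1.symm)
    refine Or.inr ⟨h11, ?_⟩
    have h22 : v.2 ≠ w.2 := fun h => hne (Prod.ext h11 h)
    rcases hv2 with h1 | ⟨hy1, h1⟩ <;> rcases hw2 with h2 | ⟨hy2, h2⟩
    · exact absurd (h1.trans h2.symm) h22
    · rw [h1, h2]; exact hxy hy2
    · rw [h1, h2]; exact (hxy hy1).symm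
    · exact absurd (h1.trans h2.symm) h22
  · exact Or.inl hp

lemma exists_avail {c : α × β → Option (Fin k)} {v : α × β}
    (S : Finset (α × β)) (hS : ∀ w, w ∈ S ↔ IsSlot rep σ xs ys w) (hcard : S.card ≤ k)
    (hsub : ∀ w, c w ≠ none → IsSlot rep σ xs ys w) (hv : IsSlot rep σ xs ys v)
    (hvu : c v = none) :
    ∃ col : Fin k, ∀ u, L.Adj u v → c u ≠ some col := by
  classical
  have hk0 : 0 < k := lt_of_lt_of_le (Finset.card_pos.mpr ⟨v, (hS v).mpr hv⟩) hcard
  by_contra hno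
  push_neg at hno
  set d₀ : Fin k := ⟨0, hk0⟩ with hd₀
  set T := S.filter (fun w => (c w).isSome) with hT
  have hTsub : T ⊆ S.erase v := by
    intro w hw
    rw [hT, Finset.mem_filter] at hw
    refine Finset.mem_erase.mpr ⟨?_, hw.1⟩
    rintro rfl
    rw [hvu] at hw
    simp at hw
  have hTcard : T.card < k :=
    lt_of_le_of_lt (Finset.card_le_card hTsub)
      (lt_of_lt_of_le (Finset.card_erase_lt_of_mem ((hS v).mpr hv)) hcard)
  have huniv : (Finset.univ : Finset (Fin k)) ⊆ T.image (fun w => (c w).getD d₀) := by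
    intro col _
    obtain ⟨u, hu1, hu2⟩ := hno col
    refine Finset.mem_image.mpr ⟨u, ?_, by rw [hu2]; rfl⟩
    refine Finset.mem_filter.mpr ⟨(hS u).mpr (hsub u (by rw [hu2]; simp)), by rw [hu2]; rfl⟩
  have h1 := Finset.card_le_card huniv
  have h2 := Finset.card_image_le (s := T) (f := fun w => (c w).getD d₀)
  rw [Finset.card_univ, Fintype.card_fin] at h1
  omega

omit [Fintype α] [Fintype β] in
lemma proper_update {c c' : α × β → Option (Fin k)} {v : α × β} {col : Fin k}
    (hP : Proper L c) (hleg : ∀ u, L.Adj u v → c u ≠ some col)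
    (h'v : c' v = some col) (h'o : ∀ u, u ≠ v → c' u = c u) :
    Proper L c' := by
  intro x w d hadj hx' hw'
  rcases upd_eq_some h'v h'o hx' with ⟨rfl, rfl⟩ | ⟨hxv, hcx⟩
  · rcases upd_eq_some h'v h'o hw' with ⟨rfl, -⟩ | ⟨hwv, hcw⟩
    · exact L.loopless.irrefl _ hadj
    · exact hleg w hadj.symm hcw
  · rcases upd_eq_some h'v h'o hw' with ⟨rfl, rfl⟩ | ⟨hwv, hcw⟩
    · exact hleg x hadj hcx
    · exact hP x w d hadj hcx hcw

set_option maxHeartbeats 1000000 in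
lemma phase1 (hL : ∀ v w : α × β, L.Adj v w ↔ (p v.1 ≠ p w.1 ∨ (v.1 = w.1 ∧ H.Adj v.2 w.2)))
    (hσ : ∀ y y' : β, H.Adj y y' → σ y ≠ σ y')
    (hrep1 : ∀ a, p (rep a) = p a) (hrep2 : ∀ a a', p a = p a' → rep a = rep a')
    (hx : σ xs = false) (hxy : σ ys = true → H.Adj xs ys)
    (hocc : ∀ z, σ z = true → σ ys = true)
    (S : Finset (α × β)) (hS : ∀ w, w ∈ S ↔ IsSlot rep σ xs ys w) (hcard : S.card ≤ k) :
    ∀ (n : ℕ) (c : α × β → Option (Fin k)),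
      (Finset.univ.filter fun u => c u = none).card ≤ n →
      Proper L c → (∀ w, c w ≠ none → IsSlot rep σ xs ys w) → AnnWins L k c := by
  intro n
  induction n with
  | zero =>
    intro c hcardu _ _
    refine AnnWins.done c fun v => ?_
    rw [Option.isSome_iff_ne_none]
    intro hv
    have hmem : v ∈ Finset.univ.filter fun u => c u = none := by simp [hv]
    have := Finset.card_pos.mpr ⟨v, hmem⟩
    omega
  | succ n ih =>
    intro c hcardu hProper hsub
    by_cases hdone : ∀ v, (c v).isSome
    · exact AnnWins.done c hdone
    by_cases hslot : ∃ v, IsSlot rep σ xs ys v ∧ c v = none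
    · obtain ⟨v, hvs, hvn⟩ := hslot
      refine AnnWins.step c v hvn (exists_avail S hS hcard hsub hvs hvn) ?_
      intro col hcol
      refine ih _ ?_ ?_ ?_
      · exact card_unc_update_le hvn (upd_self _ _ _) (fun w hw => upd_other hw _ _) hcardu
      · exact proper_update hProper hcol (upd_self _ _ _) (fun w hw => upd_other hw _ _)
      · intro w hw
        by_cases hwv : w = v
        · subst hwv; exact hvs
        · rw [upd_other hwv _ _] at hw
          exact hsub w hw
    · -- all slots coloured: establish the invariant and play phase 2
      have hall : ∀ w, IsSlot rep σ xs ys w → ∃ d, c w = some d := by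
        intro w hw
        cases hcw : c w with
        | none => exact absurd ⟨w, hw, hcw⟩ hslot
        | some d => exact ⟨d, rfl⟩
      have uniq : ∀ w w' (d : Fin k), IsSlot rep σ xs ys w → IsSlot rep σ xs ys w' →
          c w = some d → c w' = some d → w = w' := by
        intro w w' d h1 h2 hc1 hc2
        by_contra hne
        exact hProper w w' d (slots_adj hL hrep2 hxy h1 h2 hne) hc1 hc2
      have slotx : ∀ a : α, IsSlot rep σ xs ys (rep a, xs) :=
        fun a => ⟨(hrep2 _ _ (hrep1 a)).symm, Or.inl rfl⟩
      have sloty : σ ys = true → ∀ a : α, IsSlot rep σ xs ys (rep a, ys) :=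
        fun h a => ⟨(hrep2 _ _ (hrep1 a)).symm, Or.inr ⟨h, rfl⟩⟩
      have mkanc : ∀ (a : α) (z : β) (dz : Fin k), IsSlot rep σ xs ys (rep a, z) →
          c (rep a, z) = some dz → Anc L p σ c a (σ z) dz := by
        intro a z dz hslotz hdz
        refine ⟨⟨(rep a, z), hrep1 a, hdz⟩, ?_⟩
        rintro u hu1 hu2 hu3 ⟨w, hadj, hw⟩
        have hwslot : IsSlot rep σ xs ys w := hsub w (by rw [hw]; simp)
        have hweq : w = (rep a, z) := uniq w _ dz hwslot hslotz hw hdz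
        subst hweq
        rcases (hL _ _).mp hadj with hpp | ⟨-, hH⟩
        · exact hpp ((hrep1 a).trans hu1.symm)
        · exact hσ _ _ hH hu2.symm
      have hInv : Inv L p σ c := by
        intro a s
        constructor
        · intro hU
          cases s with
          | false =>
            obtain ⟨dx, hdx⟩ := hall _ (slotx a)
            refine ⟨dx, ?_⟩
            have := mkanc a xs dx (slotx a) hdx
            rwa [hx] at this
          | true =>
            obtain ⟨u₀, -, hu₀2, -⟩ := hU
            have hys : σ ys = true := hocc _ hu₀2
            obtain ⟨dy, hdy⟩ := hall _ (sloty hys a)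
            refine ⟨dy, ?_⟩
            have := mkanc a ys dy (sloty hys a) hdy
            rwa [hys] at this
        · intro h1 h2
          have hys : σ ys = true := by
            cases s with
            | false =>
              obtain ⟨u₀, -, hu₀2, -⟩ := h2
              exact hocc _ (by simpa using hu₀2)
            | true =>
              obtain ⟨u₀, -, hu₀2, -⟩ := h1
              exact hocc _ hu₀2
          obtain ⟨dx, hdx⟩ := hall _ (slotx a)
          obtain ⟨dy, hdy⟩ := hall _ (sloty hys a)
          have hancx : Anc L p σ c a false dx := by
            have := mkanc a xs dx (slotx a) hdx; rwa [hx] at this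
          have hancy : Anc L p σ c a true dy := by
            have := mkanc a ys dy (sloty hys a) hdy; rwa [hys] at this
          have hne : dx ≠ dy := by
            rintro rfl
            have := uniq _ _ dx (slotx a) (sloty hys a) hdx hdy
            have hxy' : xs = ys := congrArg Prod.snd this
            rw [hxy'] at hx
            rw [hx] at hys
            cases hys
          cases s with
          | false => exact ⟨dx, dy, hne, hancx, by simpa using hancy⟩
          | true => exact ⟨dy, dx, hne.symm, hancy, by simpa using hancx⟩
      exact phase2 hL hσ (n + 1) c hcardu hInv

end Phase1

end IndicatedLexAux


open IndicatedLexAux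

/-- If `G` is a complete multipartite graphthen `G[H]` is `k`-indicated colorable for every `k ≥ χ(G[H])`. -/
theorem lexProd_completeMultipartite_bipartite_indicatedColorable
    {α β : Type*} [Fintype α] [Fintype β] [Nonempty β]
    (G : SimpleGraph α)
    (hG : ∃ (ι : Type) (p : α → ι), ∀ u v, G.Adj u v ↔ p u ≠ p v)
    (H : SimpleGraph β) (hH : H.Colorable 2) (k : ℕ)
    (hk : (lexProd G H).chromaticNumber ≤ k) :
    IndicatedColorable (lexProd G H) k := by
  classical
  obtain ⟨ι, p, hGp⟩ := hG
  have hL : ∀ v w : α × β,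
      (lexProd G H).Adj v w ↔ (p v.1 ≠ p w.1 ∨ (v.1 = w.1 ∧ H.Adj v.2 w.2)) := by
    intro v w
    constructor
    · rintro (h | h)
      · exact Or.inl ((hGp _ _).mp h)
      · exact Or.inr h
    · rintro (h | h)
      · exact Or.inl ((hGp _ _).mpr h)
      · exact Or.inr h
  obtain ⟨C2⟩ := hH
  have hσ_exists : ∃ (σ : β → Bool) (xs ys : β),
      (∀ y y', H.Adj y y' → σ y ≠ σ y') ∧ σ xs = false ∧
      (σ ys = true → H.Adj xs ys) ∧ (∀ z, σ z = true → σ ys = true) := by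
    by_cases hE : ∃ y y' : β, H.Adj y y'
    · obtain ⟨y0, y1, hadj⟩ := hE
      refine ⟨fun z => decide (C2 z = C2 y1), y0, y1, ?_, ?_, fun _ => hadj, fun z _ => by simp⟩
      · intro y y' h
        have h2 := C2.valid h
        have key : ∀ u w t : Fin 2, u ≠ w → decide (u = t) ≠ decide (w = t) := by decide
        exact key _ _ _ h2
      · exact decide_eq_false (C2.valid hadj)
    · exact ⟨fun _ => false, Classical.arbitrary β, Classical.arbitrary β,
        fun y y' h => absurd ⟨y, y', h⟩ hE, rfl,
        fun h => Bool.noConfusion h, fun z h => Bool.noConfusion h⟩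
  obtain ⟨σ, xs, ys, hσ, hx, hxy, hocc⟩ := hσ_exists
  have hrep_exists : ∃ rep : α → α,
      (∀ a, p (rep a) = p a) ∧ (∀ a a', p a = p a' → rep a = rep a') := by
    refine ⟨fun a => if h : ∃ a', p a' = p a then h.choose else a, ?_, ?_⟩
    · intro a
      dsimp only
      rw [dif_pos (⟨a, rfl⟩ : ∃ a', p a' = p a)]
      exact Exists.choose_spec (⟨a, rfl⟩ : ∃ a', p a' = p a)
    · intro a a' h
      dsimp only
      simp only [h]
      rw [dif_pos (⟨a', rfl⟩ : ∃ x, p x = p a'), dif_pos (⟨a', rfl⟩ : ∃ x, p x = p a')]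
  obtain ⟨rep, hrep1, hrep2⟩ := hrep_exists
  have hcolk : (lexProd G H).Colorable k :=
    (SimpleGraph.chromaticNumber_le_iff_colorable).mp hk
  obtain ⟨CO⟩ := hcolk
  set S : Finset (α × β) := Finset.univ.filter (IsSlot rep σ xs ys) with hSdef
  have hS : ∀ w, w ∈ S ↔ IsSlot rep σ xs ys w := by
    intro w; simp [hSdef]
  have hcard : S.card ≤ k := by
    have hinj : Set.InjOn (fun v => CO v) S := by
      intro v hv w hw hvw
      by_contra hne
      exact (CO.valid (slots_adj hL hrep2 hxy ((hS v).mp hv) ((hS w).mp hw) hne)) hvw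
    have := Finset.card_le_card_of_injOn (t := (Finset.univ : Finset (Fin k)))
      (fun v => CO v) (fun a _ => Finset.mem_univ _) hinj
    simpa using this
  refine phase1 hL hσ hrep1 hrep2 hx hxy hocc S hS hcard
    (Finset.univ.filter fun u => (fun _ : α × β => (none : Option (Fin k))) u = none).card
    (fun _ => none) le_rfl ?_ ?_
  · intro v w d hadj hv
    simp at hv
  · intro w hw
    simp at hw
end

section
/- Let G be the complement of a finite bipartite graph and let H be a finite nonempty bipartite graph. Then the lexicographic product G[H] is k-indicated colorable for every integer k ≥ χ(G[H]). -/
open SimpleGraph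
open scoped Classical

namespace IndAux
open Finset

section Defs

variable {α β : Type*} [Fintype α] [Fintype β] {k : ℕ}

/-- `col` can legally be placed at `v`. -/
def legalc (G : SimpleGraph α) (H : SimpleGraph β) (c : α × β → Option (Fin k))
    (v : α × β) (col : Fin k) : Prop :=
  ∀ u, (lexProd G H).Adj u v → c u ≠ some col

/-- the partial coloring is proper. -/
def properc (G : SimpleGraph α) (H : SimpleGraph β) (c : α × β → Option (Fin k)) : Prop :=
  ∀ v w (col : Fin k), (lexProd G H).Adj v w → c v = some col → c w ≠ some col

def usedOn (c : α × β → Option (Fin k)) (f : α) (col : Fin k) : Prop :=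
  ∃ x, c (f, x) = some col

def pureAt (c : α × β → Option (Fin k)) (a : α) (col : Fin k) : Prop :=
  usedOn c a col ∧ ∀ g, usedOn c g col → g = a

noncomputable def usedCols (c : α × β → Option (Fin k)) : Finset (Fin k) :=
  univ.filter (fun col => ∃ v, c v = some col)

noncomputable def sfin (c : α × β → Option (Fin k)) (a : α) : Finset (Fin k) :=
  univ.filter (pureAt c a)

def isA (fA : α → Fin 2) (a : α) : Prop := fA a = 0

noncomputable def Afins (fA : α → Fin 2) : Finset α := univ.filter (fun a => isA fA a)
noncomputable def Bfins (fA : α → Fin 2) : Finset α := univ.filter (fun a => ¬ isA fA a)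

/-- Gᶜ-neighbours of `b` inside `A`. -/
noncomputable def nbrs (G : SimpleGraph α) (fA : α → Fin 2) (b : α) : Finset α :=
  univ.filter (fun a => isA fA a ∧ ¬ G.Adj b a ∧ a ≠ b)

noncomputable def NT (G : SimpleGraph α) (fA : α → Fin 2) (T : Finset α) : Finset α :=
  T.biUnion (nbrs G fA)

/-- domain description during the seeding phases: fiber `f` has colored set
exactly the first `t f` seed points. -/
def Dom (s0 s1 : β) (t : α → ℕ) (c : α × β → Option (Fin k)) : Prop :=
  ∀ f x, (c (f, x) ≠ none) ↔ ((x = s0 ∧ 1 ≤ t f) ∨ (x = s1 ∧ 2 ≤ t f))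

/-- Hall-type invariant for the B-seeding phase. -/
def Hall (G : SimpleGraph α) (fA : α → Fin 2) (r : ℕ) (t : α → ℕ)
    (c : α × β → Option (Fin k)) : Prop :=
  ∀ T ⊆ Bfins fA, (∑ b ∈ T, (r - t b)) + (usedCols c).card ≤
    k + ∑ a ∈ NT G fA T, (sfin c a).card

/-- fiber `f` has a valid template. -/
def TemplateOK (G : SimpleGraph α) (H : SimpleGraph β) (fB : β → Fin 2)
    (c : α × β → Option (Fin k)) (f : α) : Prop :=
  ∃ cX cY : Fin k,
    (∃ x, c (f, x) = some cX) ∧ (∃ y, c (f, y) = some cY) ∧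
    (cX ≠ cY ∨ ∀ x y, ¬ H.Adj x y) ∧
    (∀ x, fB x = 0 → c (f, x) = none → legalc G H c (f, x) cX) ∧
    (∀ y, fB y = 1 → c (f, y) = none → legalc G H c (f, y) cY)

noncomputable def ucount (c : α × β → Option (Fin k)) : ℕ :=
  (univ.filter (fun v : α × β => c v = none)).card

end Defs
end IndAux
namespace IndAux
open Finset

section Basic
set_option linter.unusedSectionVars false

variable {α β : Type*} [Fintype α] [Fintype β] {k : ℕ}
variable {G : SimpleGraph α} {H : SimpleGraph β}

lemma adj_iff {f g : α} {x z : β} :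
    (lexProd G H).Adj (f, x) (g, z) ↔ G.Adj f g ∨ (f = g ∧ H.Adj x z) := Iff.rfl

lemma fin2_eq_one {v : Fin 2} (h : v ≠ 0) : v = 1 := by omega

lemma fin2_eq_zero {v : Fin 2} (h : v ≠ 1) : v = 0 := by omega

lemma properc_update {i : DecidableEq (α × β)} {c : α × β → Option (Fin k)}
    {v : α × β} {col : Fin k}
    (hp : properc G H c) (hl : legalc G H c v col) :
    properc G H (@Function.update _ _ i c v (some col)) := by
  intro w w' col' hadj hw hw'
  by_cases hwv : w = v
  · by_cases hw'v : w' = v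
    · subst hwv; subst hw'v
      exact absurd hadj ((lexProd G H).loopless.irrefl _)
    · rw [Function.update_of_ne hw'v] at hw'
      rw [hwv, Function.update_self] at hw
      obtain rfl : col = col' := by injection hw
      rw [hwv] at hadj
      exact hl w' ((lexProd G H).symm.symm _ _ hadj) hw'
  · rw [Function.update_of_ne hwv] at hw
    by_cases hw'v : w' = v
    · rw [hw'v, Function.update_self] at hw'
      obtain rfl : col = col' := by injection hw'
      rw [hw'v] at hadj
      exact hl w hadj hw
    · rw [Function.update_of_ne hw'v] at hw'
      exact hp w w' col' hadj hw hw'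

lemma ucount_update {i : DecidableEq (α × β)} {c : α × β → Option (Fin k)}
    {v : α × β} {col : Fin k} (hv : c v = none) :
    ucount (@Function.update _ _ i c v (some col)) < ucount c := by
  apply Finset.card_lt_card
  constructor
  · intro w hw
    simp only [ucount, mem_filter, mem_univ, true_and] at hw ⊢
    by_cases hwv : w = v
    · subst hwv; simp [Function.update_self] at hw
    · rwa [Function.update_of_ne hwv] at hw
  · intro hsub
    have := hsub (by simp [ucount, hv] : v ∈ univ.filter (fun w : α × β => c w = none))
    simp [ucount, Function.update_self] at this

lemma mem_usedCols {c : α × β → Option (Fin k)} {col : Fin k} :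
    col ∈ usedCols c ↔ ∃ v, c v = some col := by simp [usedCols]

lemma legal_of_unused {c : α × β → Option (Fin k)} {v : α × β} {col : Fin k}
    (h : col ∉ usedCols c) : legalc G H c v col := by
  intro u _ hu
  exact h (mem_usedCols.2 ⟨u, hu⟩)

lemma usedCols_card_le {c : α × β → Option (Fin k)} : (usedCols c).card ≤ k := by
  simpa using Finset.card_le_univ (usedCols c)

lemma update_unify {V W : Type*} {i : DecidableEq V} [j : DecidableEq V] (f : V → W) (v : V) (x : W) :
    @Function.update _ _ i f v x = @Function.update _ _ j f v x := by
  funext w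
  by_cases h : w = v
  · subst h
    exact (@Function.update_self V (fun _ => W) i w x f).trans
      (@Function.update_self V (fun _ => W) j w x f).symm
  · exact (@Function.update_of_ne V (fun _ => W) i _ _ h x f).trans
      (@Function.update_of_ne V (fun _ => W) j _ _ h x f).symm

lemma update_pres_some {i : DecidableEq (α × β)} {c : α × β → Option (Fin k)}
    {v w : α × β} {col d : Fin k} (hw : c w = some d) (hv : c v = none) :
    @Function.update _ _ i c v (some col) w = some d := by
  rw [Function.update_of_ne]
  · exact hw
  · rintro rfl; rw [hv] at hw; cases hw

lemma update_none_iff {i : DecidableEq (α × β)} {c : α × β → Option (Fin k)}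
    {v w : α × β} {col : Fin k} :
    @Function.update _ _ i c v (some col) w = none ↔ (c w = none ∧ w ≠ v) := by
  by_cases hwv : w = v
  · subst hwv; simp
  · simp [Function.update_of_ne hwv, hwv]

end Basic
end IndAux
namespace IndAux
open Finset

section Completion
set_option linter.unusedSectionVars false

variable {α β : Type*} [Fintype α] [Fintype β] {k : ℕ}
variable {G : SimpleGraph α} {H : SimpleGraph β} {fB : β → Fin 2}

/-- templates of other fibers survive a move in fiber `f`. -/
lemma templateOK_other {i : DecidableEq (α × β)} {c : α × β → Option (Fin k)}
    {f g : α} {x₀ : β} {col : Fin k}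
    (hg : TemplateOK G H fB c g) (hgf : g ≠ f) (hv : c (f, x₀) = none)
    (hleg : legalc G H c (f, x₀) col) :
    TemplateOK G H fB (@Function.update _ _ i c (f, x₀) (some col)) g := by
  obtain ⟨cX, cY, ⟨xu, hxu⟩, ⟨yu, hyu⟩, hne, hX, hY⟩ := hg
  refine ⟨cX, cY, ⟨xu, update_pres_some hxu hv⟩, ⟨yu, update_pres_some hyu hv⟩, hne, ?_, ?_⟩
  · intro x hx0 hxn
    rw [update_none_iff] at hxn
    intro u hadj
    by_cases huv : u = (f, x₀)
    · subst huv
      rw [Function.update_self]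
      intro hcc
      obtain rfl : col = cX := by injection hcc
      rcases hadj with hGa | ⟨hfg, _⟩
      · exact hleg (g, xu) (Or.inl (G.symm.symm _ _ hGa)) hxu
      · exact hgf hfg.symm
    · rw [Function.update_of_ne huv]
      exact hX x hx0 hxn.1 u hadj
  · intro y hy1 hyn
    rw [update_none_iff] at hyn
    intro u hadj
    by_cases huv : u = (f, x₀)
    · subst huv
      rw [Function.update_self]
      intro hcc
      obtain rfl : col = cY := by injection hcc
      rcases hadj with hGa | ⟨hfg, _⟩
      · exact hleg (g, yu) (Or.inl (G.symm.symm _ _ hGa)) hyu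
      · exact hgf hfg.symm
    · rw [Function.update_of_ne huv]
      exact hY y hy1 hyn.1 u hadj

lemma fiber_not_adj_same_class (hfB : ∀ {x y : β}, H.Adj x y → fB x ≠ fB y)
    {f : α} {x x' : β} (h : fB x = fB x') :
    ¬ (lexProd G H).Adj (f, x) (f, x') := by
  rintro (hGa | ⟨-, hH⟩)
  · exact G.loopless.irrefl f hGa
  · exact hfB hH h

/-- Completion phase: if every fiber has a valid template, Ann wins. -/
theorem completion (hfB : ∀ {x y : β}, H.Adj x y → fB x ≠ fB y) :
    ∀ n (c : α × β → Option (Fin k)), ucount c = n → properc G H c →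
    (∀ f, TemplateOK G H fB c f) → AnnWins (lexProd G H) k c := by
  intro n
  induction n using Nat.strong_induction_on with
  | _ n IH =>
  intro c hn hp hT
  by_cases hdone : ∀ v : α × β, (c v).isSome
  · exact AnnWins.done c hdone
  push_neg at hdone
  obtain ⟨v0, hv0⟩ := hdone
  have hv0 : c v0 = none := by simpa [Option.not_isSome_iff_eq_none] using hv0
  obtain ⟨f, z⟩ := v0
  obtain ⟨cX, cY, ⟨xu, hxu⟩, ⟨yu, hyu⟩, hne, hX, hY⟩ := hT f
  have STEP : ∀ (x₀ : β), c (f, x₀) = none →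
      (∃ col, legalc G H c (f, x₀) col) →
      (∀ col, legalc G H c (f, x₀) col → ∀ (i : DecidableEq (α × β)),
        TemplateOK G H fB (@Function.update _ _ i c (f, x₀) (some col)) f) →
      AnnWins (lexProd G H) k c := by
    intro x₀ hx₀ hex htf
    refine AnnWins.step c (f, x₀) hx₀ hex ?_
    intro col hcol
    refine IH _ ?_ _ rfl (properc_update hp hcol) ?_
    · rw [← hn]; exact ucount_update hx₀
    · intro g
      by_cases hgf : g = f
      · subst hgf; exact htf col hcol _
      · exact templateOK_other (hT g) hgf hx₀ hcol
  by_cases hSX : ∃ x, fB x = 0 ∧ c (f, x) = none ∧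
      (¬ legalc G H c (f, x) cY ∨ ∀ y, H.Adj x y → c (f, y) ≠ none)
  · -- safe X-side vertex
    obtain ⟨x₀, hx0c, hx0n, hx0s⟩ := hSX
    refine STEP x₀ hx0n ⟨cX, hX x₀ hx0c hx0n⟩ ?_
    intro col hcol i
    refine ⟨cX, cY, ⟨xu, update_pres_some hxu hx0n⟩, ⟨yu, update_pres_some hyu hx0n⟩,
      hne, ?_, ?_⟩
    · intro x hx0 hxn
      rw [update_none_iff] at hxn
      intro u hadj
      by_cases huv : u = (f, x₀)
      · subst huv
        exact absurd hadj (fiber_not_adj_same_class hfB (hx0c.trans hx0.symm))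
      · rw [Function.update_of_ne huv]
        exact hX x hx0 hxn.1 u hadj
    · intro y hy1 hyn
      rw [update_none_iff] at hyn
      intro u hadj
      by_cases huv : u = (f, x₀)
      · subst huv
        rw [Function.update_self]
        intro hcc
        obtain rfl : col = cY := by injection hcc
        rcases hadj with hGa | ⟨-, hH⟩
        · exact G.loopless.irrefl f hGa
        · rcases hx0s with hpin | hnon
          · exact hpin hcol
          · exact hnon y hH hyn.1
      · rw [Function.update_of_ne huv]
        exact hY y hy1 hyn.1 u hadj
  by_cases hSY : ∃ y, fB y = 1 ∧ c (f, y) = none ∧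
      (¬ legalc G H c (f, y) cX ∨ ∀ x, H.Adj y x → c (f, x) ≠ none)
  · -- safe Y-side vertex
    obtain ⟨y₀, hy0c, hy0n, hy0s⟩ := hSY
    refine STEP y₀ hy0n ⟨cY, hY y₀ hy0c hy0n⟩ ?_
    intro col hcol i
    refine ⟨cX, cY, ⟨xu, update_pres_some hxu hy0n⟩, ⟨yu, update_pres_some hyu hy0n⟩,
      hne, ?_, ?_⟩
    · intro x hx0 hxn
      rw [update_none_iff] at hxn
      intro u hadj
      by_cases huv : u = (f, y₀)
      · subst huv
        rw [Function.update_self]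
        intro hcc
        obtain rfl : col = cX := by injection hcc
        rcases hadj with hGa | ⟨-, hH⟩
        · exact G.loopless.irrefl f hGa
        · rcases hy0s with hpin | hnon
          · exact hpin hcol
          · exact hnon x hH hxn.1
      · rw [Function.update_of_ne huv]
        exact hX x hx0 hxn.1 u hadj
    · intro y hy1 hyn
      rw [update_none_iff] at hyn
      intro u hadj
      by_cases huv : u = (f, y₀)
      · subst huv
        exact absurd hadj (fiber_not_adj_same_class hfB (hy0c.trans hy1.symm))
      · rw [Function.update_of_ne huv]
        exact hY y hy1 hyn.1 u hadj
  · -- situation S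
    push_neg at hSX hSY
    have hx₀ : ∃ x, fB x = 0 ∧ c (f, x) = none := by
      by_cases hz : fB z = 0
      · exact ⟨z, hz, hv0⟩
      · have hz1 : fB z = 1 := fin2_eq_one hz
        obtain ⟨-, x', hx'adj, hx'n⟩ := hSY z hz1 hv0
        refine ⟨x', fin2_eq_zero ?_, hx'n⟩
        intro h1
        exact hfB hx'adj (hz1.trans h1.symm)
    obtain ⟨x₀, hx0c, hx0n⟩ := hx₀
    refine STEP x₀ hx0n ⟨cX, hX x₀ hx0c hx0n⟩ ?_
    intro col hcol i
    by_cases hcy : col = cY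
    · -- swap template
      refine ⟨cY, cX, ⟨yu, update_pres_some hyu hx0n⟩, ⟨xu, update_pres_some hxu hx0n⟩,
        ?_, ?_, ?_⟩
      · rcases hne with h | h
        · exact Or.inl h.symm
        · exact Or.inr h
      · intro x hx0 hxn
        rw [update_none_iff] at hxn
        intro u hadj
        by_cases huv : u = (f, x₀)
        · subst huv
          exact absurd hadj (fiber_not_adj_same_class hfB (hx0c.trans hx0.symm))
        · rw [Function.update_of_ne huv]
          exact (hSX x hx0 hxn.1).1 u hadj
      · intro y hy1 hyn
        rw [update_none_iff] at hyn
        intro u hadj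
        by_cases huv : u = (f, x₀)
        · subst huv
          rw [Function.update_self]
          intro hcc
          obtain rfl : col = cX := by injection hcc
          rcases hne with h | h
          · exact h hcy
          · rcases hadj with hGa | ⟨-, hH⟩
            · exact G.loopless.irrefl f hGa
            · exact h _ _ hH
        · rw [Function.update_of_ne huv]
          exact (hSY y hy1 hyn.1).1 u hadj
    · -- keep template
      refine ⟨cX, cY, ⟨xu, update_pres_some hxu hx0n⟩, ⟨yu, update_pres_some hyu hx0n⟩,
        hne, ?_, ?_⟩
      · intro x hx0 hxn
        rw [update_none_iff] at hxn
        intro u hadj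
        by_cases huv : u = (f, x₀)
        · subst huv
          exact absurd hadj (fiber_not_adj_same_class hfB (hx0c.trans hx0.symm))
        · rw [Function.update_of_ne huv]
          exact hX x hx0 hxn.1 u hadj
      · intro y hy1 hyn
        rw [update_none_iff] at hyn
        intro u hadj
        by_cases huv : u = (f, x₀)
        · subst huv
          rw [Function.update_self]
          intro hcc
          obtain rfl : col = cY := by injection hcc
          exact hcy rfl
        · rw [Function.update_of_ne huv]
          exact hY y hy1 hyn.1 u hadj

end Completion
end IndAux
namespace IndAux
open Finset

section HallChoice
variable {ι : Type*} [Fintype ι] [DecidableEq ι]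

/-- The key combinatorial choice lemma: given a Hall-type condition, Ann can pick a
demand vertex `b*` such that any tight set that could be damaged contains `b*`. -/
lemma hall_choice (Bf : Finset ι) (Nb : ι → Finset ι) (d s : ι → ℕ) (U k : ℕ)
    (hUk : U ≤ k)
    (hHall : ∀ T ⊆ Bf, (∑ b ∈ T, d b) + U ≤ k + ∑ a ∈ T.biUnion Nb, s a)
    (bh : ι) (hbh : bh ∈ Bf) (hdh : d bh ≠ 0) :
    ∃ bs ∈ Bf, d bs ≠ 0 ∧
      ∀ T ⊆ Bf, (∑ b ∈ T, d b) + U = k + ∑ a ∈ T.biUnion Nb, s a →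
        (U < k → bs ∈ T) ∧
        (∀ a₀, s a₀ ≠ 0 → a₀ ∈ Nb bs → a₀ ∈ T.biUnion Nb → bs ∈ T) := by
  classical
  set D : Finset (Finset ι) := (Bf.powerset).filter
    (fun T => ((∑ b ∈ T, d b) + U = k + ∑ a ∈ T.biUnion Nb, s a) ∧ (∑ b ∈ T, d b) ≠ 0)
    with hD
  by_cases hDne : D.Nonempty
  · obtain ⟨T₁, hT₁mem, hmin⟩ := Finset.exists_min_image D Finset.card hDne
    rw [hD, mem_filter, mem_powerset] at hT₁mem
    obtain ⟨hT₁Bf, htight₁, hdT₁⟩ := hT₁mem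
    obtain ⟨bs, hbT₁, hdb⟩ := Finset.exists_ne_zero_of_sum_ne_zero hdT₁
    refine ⟨bs, hT₁Bf hbT₁, hdb, ?_⟩
    intro T hTBf htight
    have KEY : bs ∉ T → (U = k ∧ ∑ a ∈ (T.biUnion Nb) ∩ (T₁.biUnion Nb), s a = 0) := by
      intro hbT
      have hIT1 : T ∩ T₁ ⊆ T₁ := inter_subset_right
      have hIBf : T ∩ T₁ ⊆ Bf := hIT1.trans hT₁Bf
      have hUnBf : T ∪ T₁ ⊆ Bf := union_subset hTBf hT₁Bf
      have hNgUn : (T ∪ T₁).biUnion Nb = (T.biUnion Nb) ∪ (T₁.biUnion Nb) := by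
        ext a
        simp only [mem_biUnion, mem_union]
        constructor
        · rintro ⟨w, hw | hw, ha⟩
          · exact Or.inl ⟨w, hw, ha⟩
          · exact Or.inr ⟨w, hw, ha⟩
        · rintro (⟨w, hw, ha⟩ | ⟨w, hw, ha⟩)
          · exact ⟨w, Or.inl hw, ha⟩
          · exact ⟨w, Or.inr hw, ha⟩
      have hsum1 : (∑ b ∈ T ∪ T₁, d b) + ∑ b ∈ T ∩ T₁, d b
          = (∑ b ∈ T, d b) + ∑ b ∈ T₁, d b := Finset.sum_union_inter
      have hsum2 : (∑ a ∈ (T.biUnion Nb) ∪ (T₁.biUnion Nb), s a)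
          + ∑ a ∈ (T.biUnion Nb) ∩ (T₁.biUnion Nb), s a
          = (∑ a ∈ T.biUnion Nb, s a) + ∑ a ∈ T₁.biUnion Nb, s a := Finset.sum_union_inter
      have hsub : (T ∩ T₁).biUnion Nb ⊆ (T.biUnion Nb) ∩ (T₁.biUnion Nb) := by
        apply subset_inter
        · exact biUnion_subset_biUnion_of_subset_left _ inter_subset_left
        · exact biUnion_subset_biUnion_of_subset_left _ inter_subset_right
      have hsum3 : ∑ a ∈ (T ∩ T₁).biUnion Nb, s a
          ≤ ∑ a ∈ (T.biUnion Nb) ∩ (T₁.biUnion Nb), s a :=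
        Finset.sum_le_sum_of_subset hsub
      have hUn := hHall _ hUnBf
      rw [hNgUn] at hUn
      have hI := hHall _ hIBf
      -- tightness of the intersection
      have hIeq : (∑ b ∈ T ∩ T₁, d b) + U = k + ∑ a ∈ (T ∩ T₁).biUnion Nb, s a := by omega
      have hIeq2 : ∑ a ∈ (T.biUnion Nb) ∩ (T₁.biUnion Nb), s a
          = ∑ a ∈ (T ∩ T₁).biUnion Nb, s a := by omega
      by_cases hdI : ∑ b ∈ T ∩ T₁, d b = 0
      · constructor
        · omega
        · omega
      · exfalso
        have hImem : T ∩ T₁ ∈ D := by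
          rw [hD, mem_filter, mem_powerset]
          exact ⟨hIBf, hIeq, hdI⟩
        have hcard := hmin _ hImem
        have hss : T ∩ T₁ ⊂ T₁ := by
          refine ssubset_iff_of_subset hIT1 |>.2 ⟨bs, hbT₁, ?_⟩
          intro hmem
          exact hbT (mem_inter.1 hmem).1
        have := Finset.card_lt_card hss
        omega
    constructor
    · intro hUlt
      by_contra hbT
      have := (KEY hbT).1
      omega
    · intro a₀ hs hA hNg
      by_contra hbT
      have h2 := (KEY hbT).2
      have hmem : a₀ ∈ (T.biUnion Nb) ∩ (T₁.biUnion Nb) :=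
        mem_inter.2 ⟨hNg, mem_biUnion.2 ⟨bs, hbT₁, hA⟩⟩
      have := Finset.single_le_sum (f := s) (fun i _ => Nat.zero_le _) hmem
      omega
  · refine ⟨bh, hbh, hdh, ?_⟩
    intro T hTBf htight
    have hdT : ∑ b ∈ T, d b = 0 := by
      by_contra h
      exact hDne ⟨T, by rw [hD, mem_filter, mem_powerset]; exact ⟨hTBf, htight, h⟩⟩
    constructor
    · intro hUlt
      exfalso; omega
    · intro a₀ hs hA hNg
      exfalso
      have := Finset.single_le_sum (f := s) (fun i _ => Nat.zero_le _) hNg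
      omega

end HallChoice
end IndAux
namespace IndAux
open Finset

section PhaseBSupport
set_option linter.unusedSectionVars false

variable {α β : Type*} [Fintype α] [Fintype β] {k : ℕ}
variable {G : SimpleGraph α} {H : SimpleGraph β} {fA : α → Fin 2} {fB : β → Fin 2}
variable {s0 s1 : β} {r : ℕ}

lemma usedOn_update_ne_col {i : DecidableEq (α × β)} {c : α × β → Option (Fin k)}
    {v : α × β} {col col' : Fin k} (hv : c v = none) (h : col' ≠ col) {g : α} :
    usedOn (@Function.update _ _ i c v (some col)) g col' ↔ usedOn c g col' := by
  constructor
  · rintro ⟨x, hx⟩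
    by_cases hxv : ((g, x) : α × β) = v
    · rw [hxv, Function.update_self] at hx
      exact absurd (by injection hx) h.symm
    · rw [Function.update_of_ne hxv] at hx
      exact ⟨x, hx⟩
  · rintro ⟨x, hx⟩
    exact ⟨x, update_pres_some hx hv⟩

lemma usedOn_update_ne_fib {i : DecidableEq (α × β)} {c : α × β → Option (Fin k)}
    {b : α} {pt : β} {col col' : Fin k} {g : α} (hg : g ≠ b) :
    usedOn (@Function.update _ _ i c (b, pt) (some col)) g col' ↔ usedOn c g col' := by
  constructor
  · rintro ⟨x, hx⟩
    have : ((g, x) : α × β) ≠ (b, pt) := by simp [hg]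
    rw [Function.update_of_ne this] at hx
    exact ⟨x, hx⟩
  · rintro ⟨x, hx⟩
    have hne : ((g, x) : α × β) ≠ (b, pt) := by simp [hg]
    exact ⟨x, by rw [Function.update_of_ne hne]; exact hx⟩

lemma usedCols_update_used {i : DecidableEq (α × β)} {c : α × β → Option (Fin k)}
    {v : α × β} {col : Fin k} (hv : c v = none) (h : col ∈ usedCols c) :
    usedCols (@Function.update _ _ i c v (some col)) = usedCols c := by
  ext col'
  rw [mem_usedCols, mem_usedCols]
  by_cases hcc : col' = col
  · subst hcc
    exact ⟨fun _ => mem_usedCols.1 h, fun ⟨w, hw⟩ => ⟨w, update_pres_some hw hv⟩⟩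
  · constructor
    · rintro ⟨w, hw⟩
      by_cases hwv : w = v
      · rw [hwv, Function.update_self] at hw
        exact absurd (by injection hw) (Ne.symm hcc)
      · rw [Function.update_of_ne hwv] at hw
        exact ⟨w, hw⟩
    · rintro ⟨w, hw⟩
      exact ⟨w, update_pres_some hw hv⟩

lemma usedCols_update_fresh {i : DecidableEq (α × β)} {c : α × β → Option (Fin k)}
    {v : α × β} {col : Fin k} (hv : c v = none) :
    usedCols (@Function.update _ _ i c v (some col)) = insert col (usedCols c) := by
  ext col'
  rw [mem_usedCols, mem_insert, mem_usedCols]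
  by_cases hcc : col' = col
  · subst hcc
    exact ⟨fun _ => Or.inl rfl, fun _ => ⟨v, Function.update_self _ _ _⟩⟩
  · constructor
    · rintro ⟨w, hw⟩
      by_cases hwv : w = v
      · rw [hwv, Function.update_self] at hw
        exact absurd (by injection hw) (Ne.symm hcc)
      · rw [Function.update_of_ne hwv] at hw
        exact Or.inr ⟨w, hw⟩
    · rintro (hcc' | ⟨w, hw⟩)
      · exact absurd hcc' hcc
      · exact ⟨w, update_pres_some hw hv⟩

lemma sfin_update_fresh {i : DecidableEq (α × β)} {c : α × β → Option (Fin k)}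
    {b : α} {pt : β} {col : Fin k} (hv : c (b, pt) = none) (hcol : col ∉ usedCols c)
    {a : α} (ha : a ≠ b) :
    sfin (@Function.update _ _ i c (b, pt) (some col)) a = sfin c a := by
  ext col'
  simp only [sfin, mem_filter, mem_univ, true_and]
  by_cases hcc : col' = col
  · subst hcc
    constructor
    · rintro ⟨hu, -⟩
      exact absurd ((usedOn_update_ne_fib ha).1 hu) (fun ⟨w, hw⟩ => hcol (mem_usedCols.2 ⟨(a, w), hw⟩))
    · rintro ⟨hu, -⟩
      exact absurd hu (fun ⟨w, hw⟩ => hcol (mem_usedCols.2 ⟨(a, w), hw⟩))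
  · constructor
    · rintro ⟨hu, hall⟩
      refine ⟨(usedOn_update_ne_col hv hcc).1 hu, fun g hg => hall g ?_⟩
      exact (usedOn_update_ne_col hv hcc).2 hg
    · rintro ⟨hu, hall⟩
      refine ⟨(usedOn_update_ne_col hv hcc).2 hu, fun g hg => hall g ?_⟩
      exact (usedOn_update_ne_col hv hcc).1 hg

lemma sfin_update_pure_self {i : DecidableEq (α × β)} {c : α × β → Option (Fin k)}
    {b : α} {pt : β} {col : Fin k} (hv : c (b, pt) = none)
    {a₀ : α} (hpure : pureAt c a₀ col) (hab : a₀ ≠ b) :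
    sfin (@Function.update _ _ i c (b, pt) (some col)) a₀ = (sfin c a₀).erase col := by
  ext col'
  simp only [sfin, mem_filter, mem_univ, true_and, mem_erase]
  by_cases hcc : col' = col
  · subst hcc
    constructor
    · rintro ⟨-, hall⟩
      exact absurd (hall b ⟨pt, Function.update_self _ _ _⟩) hab.symm
    · rintro ⟨hne, -⟩
      exact absurd rfl hne
  · constructor
    · rintro ⟨hu, hall⟩
      refine ⟨hcc, (usedOn_update_ne_col hv hcc).1 hu, fun g hg => hall g ?_⟩
      exact (usedOn_update_ne_col hv hcc).2 hg
    · rintro ⟨-, hu, hall⟩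
      refine ⟨(usedOn_update_ne_col hv hcc).2 hu, fun g hg => hall g ?_⟩
      exact (usedOn_update_ne_col hv hcc).1 hg

lemma sfin_update_pure_other {i : DecidableEq (α × β)} {c : α × β → Option (Fin k)}
    {b : α} {pt : β} {col : Fin k} (hv : c (b, pt) = none)
    {a₀ : α} (hpure : pureAt c a₀ col) {a : α} (ha : a ≠ b) (ha0 : a ≠ a₀) :
    sfin (@Function.update _ _ i c (b, pt) (some col)) a = sfin c a := by
  ext col'
  simp only [sfin, mem_filter, mem_univ, true_and]
  by_cases hcc : col' = col
  · subst hcc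
    constructor
    · rintro ⟨hu, -⟩
      exact absurd (hpure.2 a ((usedOn_update_ne_fib ha).1 hu)) ha0
    · rintro ⟨hu, -⟩
      exact absurd (hpure.2 a hu) ha0
  · constructor
    · rintro ⟨hu, hall⟩
      refine ⟨(usedOn_update_ne_col hv hcc).1 hu, fun g hg => hall g ?_⟩
      exact (usedOn_update_ne_col hv hcc).2 hg
    · rintro ⟨hu, hall⟩
      refine ⟨(usedOn_update_ne_col hv hcc).2 hu, fun g hg => hall g ?_⟩
      exact (usedOn_update_ne_col hv hcc).1 hg

lemma sum_demand_update_mem {T : Finset α} {t : α → ℕ} {b : α} (hb : b ∈ T)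
    (hlt : t b < r) :
    (∑ x ∈ T, (r - Function.update t b (t b + 1) x)) + 1 = ∑ x ∈ T, (r - t x) := by
  rw [← Finset.add_sum_erase _ _ hb, ← Finset.add_sum_erase _ (fun x => r - t x) hb]
  have h1 : ∑ x ∈ T.erase b, (r - Function.update t b (t b + 1) x)
      = ∑ x ∈ T.erase b, (r - t x) := by
    apply Finset.sum_congr rfl
    intro x hx
    rw [Function.update_of_ne (Finset.ne_of_mem_erase hx)]
  rw [h1, Function.update_self]
  omega

lemma sum_demand_update_not_mem {T : Finset α} {t : α → ℕ} {b : α} (hb : b ∉ T) :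
    (∑ x ∈ T, (r - Function.update t b (t b + 1) x)) = ∑ x ∈ T, (r - t x) := by
  apply Finset.sum_congr rfl
  intro x hx
  rw [Function.update_of_ne (by rintro rfl; exact hb hx)]

lemma exists_fresh {c : α × β → Option (Fin k)} (h : (usedCols c).card < k) :
    ∃ col, col ∉ usedCols c := by
  by_contra hall
  push_neg at hall
  have : (univ : Finset (Fin k)) ⊆ usedCols c := fun col _ => hall col
  have := Finset.card_le_card this
  simp at this
  omega

lemma legal_of_pure {c : α × β → Option (Fin k)} {a : α} {col : Fin k}
    (hpure : pureAt c a col) {b : α} (hnb : a ∈ nbrs G fA b) (pt : β) :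
    legalc G H c (b, pt) col := by
  rintro ⟨g, w⟩ hadj hu
  have hg : g = a := hpure.2 g ⟨w, hu⟩
  simp only [nbrs, mem_filter, mem_univ, true_and] at hnb
  rcases hadj with hGa | ⟨hgb, -⟩
  · rw [hg] at hGa
    exact hnb.2.1 (G.symm.symm _ _ hGa)
  · rw [hg] at hgb
    exact hnb.2.2 hgb

end PhaseBSupport
end IndAux
namespace IndAux
open Finset

section PhaseBSupport2
set_option linter.unusedSectionVars false

variable {α β : Type*} [Fintype α] [Fintype β] {k : ℕ}
variable {G : SimpleGraph α} {H : SimpleGraph β} {fA : α → Fin 2} {fB : β → Fin 2}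
variable {s0 s1 : β} {r : ℕ}

lemma legal_classify
    (hA2 : ∀ {a a' : α}, a ≠ a' → fA a = fA a' → G.Adj a a')
    (hadj01 : r = 2 → H.Adj s0 s1)
    {t : α → ℕ} {c : α × β → Option (Fin k)}
    (hp : properc G H c) (hD : Dom s0 s1 t c)
    {b : α} (hb : ¬ isA fA b) (htb : t b < r) (hr2 : r ≤ 2) {pt : β}
    (hpt : pt = (if t b = 0 then s0 else s1))
    {col : Fin k} (hleg : legalc G H c (b, pt) col) (hused : col ∈ usedCols c) :
    ∃ a₀ ∈ nbrs G fA b, pureAt c a₀ col := by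
  obtain ⟨⟨g, w⟩, hgw⟩ := mem_usedCols.1 hused
  have huser : ∀ g' w', c (g', w') = some col → (isA fA g' ∧ ¬ G.Adj b g' ∧ g' ≠ b) := by
    intro g' w' hc
    have hgb : g' ≠ b := by
      rintro rfl
      have hcol' : c (g', w') ≠ none := by rw [hc]; simp
      rcases (hD g' w').1 hcol' with ⟨he0, h1⟩ | ⟨he1, h2⟩
      · have htb1 : t g' = 1 := by omega
        have hr2' : r = 2 := by omega
        have hpt1 : pt = s1 := by rw [hpt]; simp [htb1]
        have hadj : (lexProd G H).Adj (g', w') (g', pt) := by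
          refine Or.inr ⟨rfl, ?_⟩
          show H.Adj w' pt
          rw [he0, hpt1]
          exact hadj01 hr2'
        exact hleg _ hadj hc
      · omega
    have hnadj : ¬ G.Adj g' b := fun hGa => hleg (g', w') (Or.inl hGa) hc
    have hisA : isA fA g' := by
      by_contra hnA
      exact hnadj (hA2 hgb (by rw [fin2_eq_one hnA, fin2_eq_one hb]))
    exact ⟨hisA, fun h => hnadj (G.symm.symm _ _ h), hgb⟩
  obtain ⟨hgA, hgnadj, hgb⟩ := huser g w hgw
  refine ⟨g, by simp only [nbrs, mem_filter, mem_univ, true_and]; exact ⟨hgA, hgnadj, hgb⟩,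
    ⟨w, hgw⟩, ?_⟩
  intro g' hg'
  obtain ⟨w', hw'⟩ := hg'
  obtain ⟨hg'A, -, -⟩ := huser g' w' hw'
  by_contra hne
  have hadj : G.Adj g' g := hA2 hne (by
    have e1 : fA g' = 0 := hg'A
    have e2 : fA g = 0 := hgA
    rw [e1, e2])
  exact hp (g', w') (g, w) col (Or.inl hadj) hw' hgw

lemma Dom_update {i : DecidableEq (α × β)} {t : α → ℕ} {c : α × β → Option (Fin k)}
    (hD : Dom s0 s1 t c) (hr2 : r ≤ 2) (hs01 : r = 2 → s0 ≠ s1)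
    {b : α} (htb : t b < r) {pt : β} (hpt : pt = (if t b = 0 then s0 else s1)) {col : Fin k} :
    Dom s0 s1 (Function.update t b (t b + 1))
      (@Function.update _ _ i c (b, pt) (some col)) := by
  intro g x
  by_cases hgx : ((g, x) : α × β) = (b, pt)
  · obtain ⟨rfl, rfl⟩ : g = b ∧ x = pt := Prod.ext_iff.1 hgx
    rw [Function.update_self]
    constructor
    · intro _
      by_cases h0 : t g = 0
      · exact Or.inl ⟨by rw [hpt]; simp [h0], by rw [Function.update_self]; omega⟩
      · have h1 : t g = 1 := by omega
        exact Or.inr ⟨by rw [hpt]; simp [h0], by rw [Function.update_self]; omega⟩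
    · intro _; simp
  · rw [Function.update_of_ne hgx, hD g x]
    by_cases hgb : g = b
    · subst hgb
      have hx : x ≠ pt := fun h => hgx (by rw [h])
      rw [Function.update_self]
      by_cases h0 : t g = 0
      · have hxs0 : x ≠ s0 := by rw [hpt] at hx; simpa [h0] using hx
        constructor
        · rintro (⟨rfl, h⟩ | ⟨rfl, h⟩) <;> omega
        · rintro (⟨rfl, h⟩ | ⟨rfl, h⟩)
          · exact absurd rfl hxs0
          · omega
      · have h1 : t g = 1 := by omega
        have hxs1 : x ≠ s1 := by rw [hpt] at hx; simpa [h0] using hx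
        constructor
        · rintro (⟨rfl, h⟩ | ⟨rfl, h⟩)
          · exact Or.inl ⟨rfl, by omega⟩
          · omega
        · rintro (⟨rfl, h⟩ | ⟨rfl, h⟩)
          · exact Or.inl ⟨rfl, by omega⟩
          · exact absurd rfl hxs1
    · rw [Function.update_of_ne hgb]

lemma seeded_templateOK
    (hfB : ∀ {x y : β}, H.Adj x y → fB x ≠ fB y)
    (hseed : (r = 1 ∧ s1 = s0 ∧ ∀ x y, ¬H.Adj x y) ∨
      (r = 2 ∧ fB s0 = 0 ∧ fB s1 = 1 ∧ H.Adj s0 s1))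
    {t : α → ℕ} {c : α × β → Option (Fin k)}
    (hp : properc G H c) (hD : Dom s0 s1 t c) (htall : ∀ f, t f = r) :
    ∀ f, TemplateOK G H fB c f := by
  intro f
  have h1r : 1 ≤ r := by rcases hseed with ⟨h, -⟩ | ⟨h, -⟩ <;> omega
  have h0 : c (f, s0) ≠ none := (hD f s0).2 (Or.inl ⟨rfl, by rw [htall]; omega⟩)
  obtain ⟨c0, hc0⟩ := Option.ne_none_iff_exists'.1 h0
  rcases hseed with ⟨hr1, hs10, hedg⟩ | ⟨hr2, hfs0, hfs1, hadj01⟩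
  · refine ⟨c0, c0, ⟨s0, hc0⟩, ⟨s0, hc0⟩, Or.inr hedg, ?_, ?_⟩ <;>
    · intro x _ _
      rintro ⟨g, w⟩ hadj hu
      rcases hadj with hGa | ⟨heq, hH⟩
      · exact hp (f, s0) (g, w) c0 (Or.inl (G.symm.symm _ _ hGa)) hc0 hu
      · exact hedg w x hH
  · have h1 : c (f, s1) ≠ none := (hD f s1).2 (Or.inr ⟨rfl, by rw [htall]; omega⟩)
    obtain ⟨c1, hc1⟩ := Option.ne_none_iff_exists'.1 h1
    have hne : c0 ≠ c1 := by
      intro h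
      exact hp (f, s0) (f, s1) c0 (Or.inr ⟨rfl, hadj01⟩) hc0 (h ▸ hc1)
    refine ⟨c0, c1, ⟨s0, hc0⟩, ⟨s1, hc1⟩, Or.inl hne, ?_, ?_⟩
    · intro x hx _
      rintro ⟨g, w⟩ hadj hu
      rcases hadj with hGa | ⟨heq, hH⟩
      · exact hp (f, s0) (g, w) c0 (Or.inl (G.symm.symm _ _ hGa)) hc0 hu
      · obtain rfl : g = f := heq
        have hH' : H.Adj w x := hH
        have hcw := (hD g w).1 (by rw [hu]; simp)
        rcases hcw with ⟨he, -⟩ | ⟨he, -⟩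
        · rw [he] at hH'
          exact hfB hH' (by rw [hfs0, hx])
        · rw [he] at hu
          rw [hc1] at hu
          exact hne (Option.some_inj.mp hu).symm
    · intro y hy _
      rintro ⟨g, w⟩ hadj hu
      rcases hadj with hGa | ⟨heq, hH⟩
      · exact hp (f, s1) (g, w) c1 (Or.inl (G.symm.symm _ _ hGa)) hc1 hu
      · obtain rfl : g = f := heq
        have hH' : H.Adj w y := hH
        have hcw := (hD g w).1 (by rw [hu]; simp)
        rcases hcw with ⟨rfl, -⟩ | ⟨rfl, -⟩
        · rw [hc0] at hu
          exact hne (Option.some_inj.mp hu)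
        · exact hfB hH' (by rw [hfs1, hy])

end PhaseBSupport2
end IndAux
namespace IndAux
open Finset

section PhaseB
set_option linter.unusedSectionVars false

variable {α β : Type*} [Fintype α] [Fintype β] {k : ℕ}
variable {G : SimpleGraph α} {H : SimpleGraph β} {fA : α → Fin 2} {fB : β → Fin 2}
variable {s0 s1 : β} {r : ℕ}

lemma mem_NT_isA {T : Finset α} {a : α} (h : a ∈ NT G fA T) : isA fA a := by
  obtain ⟨b, -, hb⟩ := mem_biUnion.1 h
  simp only [nbrs, mem_filter, mem_univ, true_and] at hb
  exact hb.1

theorem phaseB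
    (hA2 : ∀ {a a' : α}, a ≠ a' → fA a = fA a' → G.Adj a a')
    (hfB : ∀ {x y : β}, H.Adj x y → fB x ≠ fB y)
    (hseed : (r = 1 ∧ s1 = s0 ∧ ∀ x y, ¬H.Adj x y) ∨
      (r = 2 ∧ fB s0 = 0 ∧ fB s1 = 1 ∧ H.Adj s0 s1)) :
    ∀ M (t : α → ℕ) (c : α × β → Option (Fin k)),
      (∑ b ∈ Bfins fA, (r - t b)) = M →
      properc G H c → Dom s0 s1 t c → (∀ f, t f ≤ r) → (∀ a, isA fA a → t a = r) →
      Hall G fA r t c →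
      AnnWins (lexProd G H) k c := by
  have hr2 : r ≤ 2 := by rcases hseed with ⟨h, -⟩ | ⟨h, -⟩ <;> omega
  have hs01 : r = 2 → s0 ≠ s1 := by
    intro hr
    rcases hseed with ⟨h, -, -⟩ | ⟨-, h0, h1, -⟩
    · omega
    · intro he
      rw [he] at h0
      rw [h0] at h1
      exact absurd h1 (by decide)
  have hadj01 : r = 2 → H.Adj s0 s1 := by
    intro hr
    rcases hseed with ⟨h, -⟩ | ⟨-, -, -, h⟩
    · omega
    · exact h
  intro M
  induction M using Nat.strong_induction_on with
  | _ M IH =>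
  intro t c hM hp hD htr htA hHall
  by_cases hM0 : M = 0
  · have htall : ∀ f, t f = r := by
      intro f
      by_cases hf : isA fA f
      · exact htA f hf
      · have hmem : f ∈ Bfins fA := by simp [Bfins, hf]
        have h0 := Finset.sum_eq_zero_iff.1 (by rw [hM, hM0]) f hmem
        have := htr f
        omega
    exact completion hfB (ucount c) c rfl hp (seeded_templateOK hfB hseed hp hD htall)
  · obtain ⟨bh, hbh, hdh⟩ := Finset.exists_ne_zero_of_sum_ne_zero (by rw [hM]; exact hM0)
    obtain ⟨bs, hbsB, hdbs, hKEY⟩ := hall_choice (Bfins fA) (nbrs G fA)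
      (fun b => r - t b) (fun a => (sfin c a).card) (usedCols c).card k
      usedCols_card_le hHall bh hbh hdh
    have hbsnA : ¬ isA fA bs := by
      have := hbsB
      simp only [Bfins, mem_filter, mem_univ, true_and] at this
      exact this
    have hdbs' : r - t bs ≠ 0 := hdbs
    have htbs : t bs < r := by omega
    set pt := if t bs = 0 then s0 else s1 with hpt
    have hunc : c (bs, pt) = none := by
      by_contra h
      rcases (hD bs pt).1 h with ⟨he, h1⟩ | ⟨he, h2⟩
      · by_cases h0 : t bs = 0
        · omega
        · have hr2' : r = 2 := by omega
          have hpt1 : pt = s1 := by rw [hpt]; simp [h0]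
          exact hs01 hr2' (by rw [← he, hpt1])
      · omega
    have hHsing := hHall {bs} (Finset.singleton_subset_iff.2 hbsB)
    simp only [NT, Finset.sum_singleton, Finset.singleton_biUnion] at hHsing
    have hex : ∃ col, legalc G H c (bs, pt) col := by
      by_cases hs : ∑ a ∈ nbrs G fA bs, (sfin c a).card = 0
      · have hUlt : (usedCols c).card < k := by omega
        obtain ⟨col, hcol⟩ := exists_fresh hUlt
        exact ⟨col, legal_of_unused hcol⟩
      · obtain ⟨a, hanb, hane⟩ := Finset.exists_ne_zero_of_sum_ne_zero hs
        obtain ⟨col, hcol⟩ := Finset.card_pos.1 (Nat.pos_of_ne_zero hane)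
        have hpure : pureAt c a col := by
          simp only [sfin, mem_filter, mem_univ, true_and] at hcol
          exact hcol
        exact ⟨col, legal_of_pure hpure hanb pt⟩
    refine AnnWins.step c (bs, pt) hunc hex ?_
    intro col hcol
    rw [update_unify c (bs, pt) (some col)]
    have hmeas := sum_demand_update_mem (r := r) (T := Bfins fA) (t := t) (b := bs) hbsB htbs
    have ht'le : ∀ f, Function.update t bs (t bs + 1) f ≤ r := by
      intro f
      by_cases hf : f = bs
      · subst hf; rw [Function.update_self]; omega
      · rw [Function.update_of_ne hf]; exact htr f
    have ht'A : ∀ a, isA fA a → Function.update t bs (t bs + 1) a = r := by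
      intro a ha
      rw [Function.update_of_ne (by rintro rfl; exact hbsnA ha)]
      exact htA a ha
    by_cases hfresh : col ∈ usedCols c
    · -- reuse of a pure supply color
      obtain ⟨a₀, ha₀nb, hpure⟩ := legal_classify hA2 hadj01 hp hD hbsnA htbs hr2 hpt hcol hfresh
      have ha₀facts : isA fA a₀ ∧ ¬ G.Adj bs a₀ ∧ a₀ ≠ bs := by
        have := ha₀nb
        simp only [nbrs, mem_filter, mem_univ, true_and] at this
        exact this
      have hcolmem : col ∈ sfin c a₀ := by
        simp only [sfin, mem_filter, mem_univ, true_and]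
        exact hpure
      refine IH _ (by omega) _ _ rfl (properc_update hp hcol)
        (Dom_update hD hr2 hs01 htbs hpt) ht'le ht'A ?_
      intro T hT
      rw [usedCols_update_used hunc hfresh]
      have hTA : ∀ a ∈ NT G fA T, a ≠ bs := by
        intro a ha
        rintro rfl
        exact hbsnA (mem_NT_isA ha)
      have hsfsum : (∑ a ∈ NT G fA T, (sfin (Function.update c (bs, pt) (some col)) a).card)
          + (if a₀ ∈ NT G fA T then 1 else 0) = ∑ a ∈ NT G fA T, (sfin c a).card := by
        by_cases hmem : a₀ ∈ NT G fA T
        · rw [if_pos hmem]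
          rw [← Finset.add_sum_erase _ _ hmem,
            ← Finset.add_sum_erase _ (fun a => (sfin c a).card) hmem]
          have hrest : ∑ a ∈ (NT G fA T).erase a₀,
              (sfin (Function.update c (bs, pt) (some col)) a).card
              = ∑ a ∈ (NT G fA T).erase a₀, (sfin c a).card := by
            refine Finset.sum_congr rfl fun a ha => ?_
            rw [sfin_update_pure_other hunc hpure
              (hTA a (Finset.mem_of_mem_erase ha)) (Finset.ne_of_mem_erase ha)]
          rw [hrest, sfin_update_pure_self hunc hpure ha₀facts.2.2,
            Finset.card_erase_of_mem hcolmem]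
          have hge : 1 ≤ (sfin c a₀).card := Finset.card_pos.2 ⟨col, hcolmem⟩
          omega
        · rw [if_neg hmem]
          rw [Nat.add_zero]
          refine Finset.sum_congr rfl fun a ha => ?_
          rw [sfin_update_pure_other hunc hpure (hTA a ha) (by rintro rfl; exact hmem ha)]
      by_cases hbsT : bs ∈ T
      · have hdsum := sum_demand_update_mem (r := r) (T := T) (t := t) (b := bs) hbsT htbs
        have ha₀T : a₀ ∈ NT G fA T := mem_biUnion.2 ⟨bs, hbsT, ha₀nb⟩
        rw [if_pos ha₀T] at hsfsum
        have hold := hHall T hT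
        omega
      · have hdsum := sum_demand_update_not_mem (r := r) (T := T) (t := t) (b := bs) hbsT
        by_cases ha₀T : a₀ ∈ NT G fA T
        · rw [if_pos ha₀T] at hsfsum
          have hold := hHall T hT
          have hnt : (∑ b ∈ T, (r - t b)) + (usedCols c).card
              ≠ k + ∑ a ∈ NT G fA T, (sfin c a).card := by
            intro htight
            exact hbsT ((hKEY T hT htight).2 a₀
              (Finset.card_pos.2 ⟨col, hcolmem⟩).ne' ha₀nb ha₀T)
          omega
        · rw [if_neg ha₀T, Nat.add_zero] at hsfsum
          have hold := hHall T hT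
          omega
    · -- fresh color
      have hUlt : (usedCols c).card < k := by
        have hss : usedCols c ⊂ univ := by
          refine Finset.ssubset_univ_iff.2 ?_
          intro h
          exact hfresh (h ▸ mem_univ col)
        have := Finset.card_lt_card hss
        simpa using this
      refine IH _ (by omega) _ _ rfl (properc_update hp hcol)
        (Dom_update hD hr2 hs01 htbs hpt) ht'le ht'A ?_
      intro T hT
      rw [usedCols_update_fresh hunc, Finset.card_insert_of_notMem hfresh]
      have hsfsum : ∑ a ∈ NT G fA T, (sfin (Function.update c (bs, pt) (some col)) a).card
          = ∑ a ∈ NT G fA T, (sfin c a).card := by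
        refine Finset.sum_congr rfl fun a ha => ?_
        rw [sfin_update_fresh hunc hfresh (by rintro rfl; exact hbsnA (mem_NT_isA ha))]
      rw [hsfsum]
      by_cases hbsT : bs ∈ T
      · have hdsum := sum_demand_update_mem (r := r) (T := T) (t := t) (b := bs) hbsT htbs
        have hold := hHall T hT
        omega
      · have hdsum := sum_demand_update_not_mem (r := r) (T := T) (t := t) (b := bs) hbsT
        have hold := hHall T hT
        have hnt : (∑ b ∈ T, (r - t b)) + (usedCols c).card
            ≠ k + ∑ a ∈ NT G fA T, (sfin c a).card := by
          intro htight
          exact hbsT ((hKEY T hT htight).1 hUlt)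
        omega

end PhaseB
end IndAux
namespace IndAux
open Finset

section PhaseA
set_option linter.unusedSectionVars false

variable {α β : Type*} [Fintype α] [Fintype β] {k : ℕ}
variable {G : SimpleGraph α} {H : SimpleGraph β} {fA : α → Fin 2} {fB : β → Fin 2}
variable {s0 s1 : β} {r : ℕ}

lemma counting [Nonempty β] (C0 : (lexProd G H).Coloring (Fin k))
    (hA2 : ∀ {a a' : α}, a ≠ a' → fA a = fA a' → G.Adj a a')
    (hseed : (r = 1 ∧ s1 = s0 ∧ ∀ x y, ¬H.Adj x y) ∨
      (r = 2 ∧ fB s0 = 0 ∧ fB s1 = 1 ∧ H.Adj s0 s1)) :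
    ∀ T ⊆ Bfins fA, r * T.card + r * (Afins fA).card ≤ k + r * (NT G fA T).card := by
  intro T hT
  classical
  set colsOn : α → Finset (Fin k) := fun f => Finset.image (fun x => C0 (f, x)) Finset.univ
    with hcolsOn
  set F : Finset α := (Afins fA \ NT G fA T) ∪ T with hF
  have hAT : ∀ f g, f ∈ Afins fA \ NT G fA T → g ∈ T → G.Adj f g := by
    intro f g hf hg
    have h1 : isA fA f := by
      have := (Finset.mem_sdiff.1 hf).1
      simpa [Afins] using this
    have h2 : f ∉ NT G fA T := (Finset.mem_sdiff.1 hf).2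
    have h3 : ¬ isA fA g := by
      have := hT hg
      simpa [Bfins] using this
    have hfg : f ≠ g := fun h => h3 (h ▸ h1)
    by_contra hnadj
    apply h2
    refine mem_biUnion.2 ⟨g, hg, ?_⟩
    simp only [nbrs, mem_filter, mem_univ, true_and]
    exact ⟨h1, fun h => hnadj (G.symm.symm _ _ h), hfg⟩
  have hadj : ∀ f ∈ F, ∀ g ∈ F, f ≠ g → G.Adj f g := by
    intro f hf g hg hfg
    rw [hF, mem_union] at hf hg
    rcases hf with hf | hf <;> rcases hg with hg | hg
    · refine hA2 hfg ?_
      have h1 : isA fA f := by simpa [Afins] using (Finset.mem_sdiff.1 hf).1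
      have h2 : isA fA g := by simpa [Afins] using (Finset.mem_sdiff.1 hg).1
      rw [show fA f = 0 from h1, show fA g = 0 from h2]
    · exact hAT f g hf hg
    · exact G.symm.symm _ _ (hAT g f hg hf)
    · refine hA2 hfg ?_
      have h1 : ¬ isA fA f := by simpa [Bfins] using hT hf
      have h2 : ¬ isA fA g := by simpa [Bfins] using hT hg
      rw [fin2_eq_one h1, fin2_eq_one h2]
  have hdisj : ∀ f ∈ F, ∀ g ∈ F, f ≠ g → Disjoint (colsOn f) (colsOn g) := by
    intro f hf g hg hfg
    rw [Finset.disjoint_left]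
    intro col hcf hcg
    rw [hcolsOn] at hcf hcg
    obtain ⟨x, -, hx⟩ := Finset.mem_image.1 hcf
    obtain ⟨y, -, hy⟩ := Finset.mem_image.1 hcg
    exact C0.valid (v := (f, x)) (w := (g, y)) (Or.inl (hadj f hf g hg hfg)) (hx.trans hy.symm)
  have hcard : ∀ f, r ≤ (colsOn f).card := by
    intro f
    show r ≤ (Finset.image (fun x => C0 (f, x)) Finset.univ).card
    rcases hseed with ⟨hr1, -, -⟩ | ⟨hr2', -, -, hadj01⟩
    · rw [hr1]
      refine Finset.card_pos.2 ?_
      obtain ⟨x⟩ := ‹Nonempty β›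
      exact ⟨C0 (f, x), Finset.mem_image.2 ⟨x, mem_univ x, rfl⟩⟩
    · rw [hr2']
      have hne : C0 (f, s0) ≠ C0 (f, s1) :=
        C0.valid (v := (f, s0)) (w := (f, s1)) (Or.inr ⟨rfl, hadj01⟩)
      have h2 := Finset.one_lt_card.2 ⟨C0 (f, s0),
        Finset.mem_image_of_mem (fun x => C0 (f, x)) (mem_univ s0),
        C0 (f, s1), Finset.mem_image_of_mem (fun x => C0 (f, x)) (mem_univ s1), hne⟩
      omega
  have hbig : ∑ f ∈ F, (colsOn f).card ≤ k := by
    rw [← Finset.card_biUnion hdisj]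
    have := Finset.card_le_univ (F.biUnion colsOn)
    simpa using this
  have hFge : F.card * r ≤ ∑ f ∈ F, (colsOn f).card := by
    have := Finset.card_nsmul_le_sum F (fun f => (colsOn f).card) r (fun f _ => hcard f)
    simpa [smul_eq_mul] using this
  have hFcard : F.card = (Afins fA \ NT G fA T).card + T.card := by
    rw [hF]
    refine Finset.card_union_of_disjoint ?_
    rw [Finset.disjoint_left]
    intro f hf hfT
    have h1 : isA fA f := by simpa [Afins] using (Finset.mem_sdiff.1 hf).1
    have h2 : ¬ isA fA f := by simpa [Bfins] using hT hfT
    exact h2 h1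
  have hAsplit : (Afins fA).card ≤ (Afins fA \ NT G fA T).card + (NT G fA T).card :=
    Finset.card_le_card_sdiff_add_card
  have h2 : ((Afins fA \ NT G fA T).card + T.card) * r ≤ k := by
    rw [← hFcard]; exact le_trans hFge hbig
  have h3 : r * (Afins fA).card
      ≤ r * (Afins fA \ NT G fA T).card + r * (NT G fA T).card := by
    calc r * (Afins fA).card
        ≤ r * ((Afins fA \ NT G fA T).card + (NT G fA T).card) :=
          Nat.mul_le_mul_left _ hAsplit
      _ = r * (Afins fA \ NT G fA T).card + r * (NT G fA T).card := Nat.mul_add _ _ _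
  nlinarith [h2, h3]

theorem phaseA
    (hA2 : ∀ {a a' : α}, a ≠ a' → fA a = fA a' → G.Adj a a')
    (hfB : ∀ {x y : β}, H.Adj x y → fB x ≠ fB y)
    (hseed : (r = 1 ∧ s1 = s0 ∧ ∀ x y, ¬H.Adj x y) ∨
      (r = 2 ∧ fB s0 = 0 ∧ fB s1 = 1 ∧ H.Adj s0 s1))
    (hkb : ∀ T ⊆ Bfins fA, r * T.card + r * (Afins fA).card ≤ k + r * (NT G fA T).card) :
    ∀ N (t : α → ℕ) (c : α × β → Option (Fin k)),
      (∑ a ∈ Afins fA, (r - t a)) = N →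
      properc G H c → Dom s0 s1 t c → (∀ f, t f ≤ r) → (∀ b, ¬ isA fA b → t b = 0) →
      ((usedCols c).card = ∑ a ∈ Afins fA, t a) →
      (∀ v w (col : Fin k), c v = some col → c w = some col → v = w) →
      AnnWins (lexProd G H) k c := by
  have hr2 : r ≤ 2 := by rcases hseed with ⟨h, -⟩ | ⟨h, -⟩ <;> omega
  have h1r : 1 ≤ r := by rcases hseed with ⟨h, -⟩ | ⟨h, -⟩ <;> omega
  have hs01 : r = 2 → s0 ≠ s1 := by
    intro hr
    rcases hseed with ⟨h, -, -⟩ | ⟨-, h0, h1, -⟩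
    · omega
    · intro he
      rw [he] at h0
      rw [h0] at h1
      exact absurd h1 (by decide)
  have hadj01 : r = 2 → H.Adj s0 s1 := by
    intro hr
    rcases hseed with ⟨h, -⟩ | ⟨-, -, -, h⟩
    · omega
    · exact h
  intro N
  induction N using Nat.strong_induction_on with
  | _ N IH =>
  intro t c hN hp hD htr htB hcount hinj
  by_cases hN0 : N = 0
  · -- transition to phase B
    have htA : ∀ a, isA fA a → t a = r := by
      intro a ha
      have hmem : a ∈ Afins fA := by simp [Afins, ha]
      have h0 := Finset.sum_eq_zero_iff.1 (by rw [hN, hN0]) a hmem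
      have := htr a
      omega
    refine phaseB hA2 hfB hseed _ t c rfl hp hD htr htA ?_
    intro T hT
    have hTd : ∑ b ∈ T, (r - t b) = T.card * r := by
      have hz : ∀ b ∈ T, r - t b = r := by
        intro b hb
        have hbB : ¬ isA fA b := by
          have := hT hb
          simpa [Bfins] using this
        rw [htB b hbB]
        omega
      rw [Finset.sum_congr rfl hz, Finset.sum_const, smul_eq_mul]
    have hUc : (usedCols c).card = (Afins fA).card * r := by
      rw [hcount]
      have hz : ∀ a ∈ Afins fA, t a = r := by
        intro a ha
        exact htA a (by simpa [Afins] using ha)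
      rw [Finset.sum_congr rfl hz, Finset.sum_const, smul_eq_mul]
    have hsf : ∀ a ∈ NT G fA T, r ≤ (sfin c a).card := by
      intro a ha
      have haA : isA fA a := mem_NT_isA ha
      have hta : t a = r := htA a haA
      have h0 : c (a, s0) ≠ none := (hD a s0).2 (Or.inl ⟨rfl, by omega⟩)
      obtain ⟨c0, hc0⟩ := Option.ne_none_iff_exists'.1 h0
      have hpure : ∀ (col : Fin k) (x : β), c (a, x) = some col → col ∈ sfin c a := by
        intro col x hx
        simp only [sfin, mem_filter, mem_univ, true_and]
        refine ⟨⟨x, hx⟩, ?_⟩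
        intro g hg
        obtain ⟨w, hw⟩ := hg
        exact congrArg Prod.fst (hinj (g, w) (a, x) col hw hx)
      rcases hseed with ⟨hr1', -, -⟩ | ⟨hr2', -, -, -⟩
      · have hm := hpure c0 s0 hc0
        have := Finset.card_pos.2 ⟨c0, hm⟩
        omega
      · have h1 : c (a, s1) ≠ none := (hD a s1).2 (Or.inr ⟨rfl, by omega⟩)
        obtain ⟨c1, hc1⟩ := Option.ne_none_iff_exists'.1 h1
        have hne : c0 ≠ c1 := by
          intro h
          have heq := hinj (a, s0) (a, s1) c0 hc0 (h ▸ hc1)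
          exact hs01 hr2' (congrArg Prod.snd heq)
        have hm0 := hpure c0 s0 hc0
        have hm1 := hpure c1 s1 hc1
        have := Finset.one_lt_card.2 ⟨c0, hm0, c1, hm1, hne⟩
        omega
    have hsum : r * (NT G fA T).card ≤ ∑ a ∈ NT G fA T, (sfin c a).card := by
      have := Finset.card_nsmul_le_sum (NT G fA T) (fun a => (sfin c a).card) r hsf
      simpa [smul_eq_mul, mul_comm] using this
    have hkb' := hkb T hT
    rw [hTd, hUc]
    nlinarith [hkb', hsum]
  · -- seed one more A-slot
    have hNne : (∑ a ∈ Afins fA, (r - t a)) ≠ 0 := by rw [hN]; exact hN0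
    obtain ⟨a₀, ha₀A, hd₀⟩ := Finset.exists_ne_zero_of_sum_ne_zero hNne
    have ha₀isA : isA fA a₀ := by simpa [Afins] using ha₀A
    have hta₀ : t a₀ < r := by omega
    set pt := if t a₀ = 0 then s0 else s1 with hpt
    have hunc : c (a₀, pt) = none := by
      by_contra h
      rcases (hD a₀ pt).1 h with ⟨he, h1⟩ | ⟨he, h2⟩
      · by_cases h0 : t a₀ = 0
        · omega
        · have hr2' : r = 2 := by omega
          have hpt1 : pt = s1 := by rw [hpt]; simp [h0]
          exact hs01 hr2' (by rw [← he, hpt1])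
      · omega
    have hlt : (usedCols c).card < k := by
      have hkA : r * (Afins fA).card ≤ k := by
        have hkb0 := hkb ∅ (Finset.empty_subset _)
        simpa [NT] using hkb0
      have hsumlt : (∑ a ∈ Afins fA, t a) < r * (Afins fA).card := by
        have hstrict : ∑ a ∈ Afins fA, t a < ∑ _a ∈ Afins fA, r :=
          Finset.sum_lt_sum (fun i _ => htr i) ⟨a₀, ha₀A, by omega⟩
        rwa [Finset.sum_const, smul_eq_mul, mul_comm] at hstrict
      omega
    have hex : ∃ col, legalc G H c (a₀, pt) col := by
      obtain ⟨col, hcol⟩ := exists_fresh hlt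
      exact ⟨col, legal_of_unused hcol⟩
    refine AnnWins.step c (a₀, pt) hunc hex ?_
    intro col hcol
    rw [update_unify c (a₀, pt) (some col)]
    have hfresh : col ∉ usedCols c := by
      intro hused
      obtain ⟨⟨g, w⟩, hgw⟩ := mem_usedCols.1 hused
      have hcw := (hD g w).1 (by rw [hgw]; simp)
      have htg : 1 ≤ t g := by rcases hcw with ⟨-, h⟩ | ⟨-, h⟩ <;> omega
      have hgA : isA fA g := by
        by_contra hng
        rw [htB g hng] at htg
        omega
      by_cases hga : g = a₀
      · subst hga
        rcases hcw with ⟨he, h1⟩ | ⟨he, h2⟩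
        · have ht1 : t g = 1 := by omega
          have hr2' : r = 2 := by omega
          have hpt1 : pt = s1 := by rw [hpt]; simp [ht1]
          refine hcol (g, w) ?_ hgw
          refine Or.inr ⟨rfl, ?_⟩
          show H.Adj w pt
          rw [he, hpt1]
          exact hadj01 hr2'
        · omega
      · refine hcol (g, w) (Or.inl (hA2 hga ?_)) hgw
        rw [show fA g = 0 from hgA, show fA a₀ = 0 from ha₀isA]
    have hms := sum_demand_update_mem (r := r) (T := Afins fA) (t := t) (b := a₀) ha₀A hta₀
    refine IH _ (by omega) _ _ rfl (properc_update hp hcol)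
      (Dom_update hD hr2 hs01 hta₀ hpt) ?_ ?_ ?_ ?_
    · intro f
      by_cases hf : f = a₀
      · subst hf; rw [Function.update_self]; omega
      · rw [Function.update_of_ne hf]; exact htr f
    · intro b hb
      rw [Function.update_of_ne (by rintro rfl; exact hb ha₀isA)]
      exact htB b hb
    · rw [usedCols_update_fresh hunc, Finset.card_insert_of_notMem hfresh, hcount]
      have hsucc : ∑ a ∈ Afins fA, Function.update t a₀ (t a₀ + 1) a
          = (∑ a ∈ Afins fA, t a) + 1 := by
        rw [← Finset.add_sum_erase _ _ ha₀A, ← Finset.add_sum_erase _ t ha₀A,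
          Function.update_self]
        have hrest : ∑ a ∈ (Afins fA).erase a₀, Function.update t a₀ (t a₀ + 1) a
            = ∑ a ∈ (Afins fA).erase a₀, t a :=
          Finset.sum_congr rfl fun a ha => by
            rw [Function.update_of_ne (Finset.ne_of_mem_erase ha)]
        rw [hrest]
        omega
      omega
    · intro v w col' hv hw
      by_cases hv0 : v = (a₀, pt)
      · by_cases hw0 : w = (a₀, pt)
        · rw [hv0, hw0]
        · subst hv0
          rw [Function.update_self] at hv
          rw [Function.update_of_ne hw0] at hw
          obtain rfl : col = col' := by injection hv
          exact absurd (mem_usedCols.2 ⟨w, hw⟩) hfresh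
      · rw [Function.update_of_ne hv0] at hv
        by_cases hw0 : w = (a₀, pt)
        · subst hw0
          rw [Function.update_self] at hw
          obtain rfl : col = col' := by injection hw
          exact absurd (mem_usedCols.2 ⟨v, hv⟩) hfresh
        · rw [Function.update_of_ne hw0] at hw
          exact hinj v w col' hv hw

end PhaseA
end IndAux
/-- If `G` is the complement of a bipartite graph and `H` is a nonempty bipartite graph,
then `G[H]` is `k`-indicated colorable for every `k ≥ χ(G[H])`. -/
theorem lexProd_complBipartite_bipartite_indicatedColorable
    {α β : Type*} [Fintype α] [Fintype β] [Nonempty β]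
    (G : SimpleGraph α) (hG : Gᶜ.Colorable 2)
    (H : SimpleGraph β) (hH : H.Colorable 2) (k : ℕ)
    (hk : (lexProd G H).chromaticNumber ≤ k) :
    IndicatedColorable (lexProd G H) k := by
  classical
  obtain ⟨C0⟩ := SimpleGraph.chromaticNumber_le_iff_colorable.mp hk
  obtain ⟨CA⟩ := hG
  obtain ⟨CB⟩ := hH
  set fA : α → Fin 2 := fun a => CA a with hfAdef
  set fB : β → Fin 2 := fun x => CB x with hfBdef
  have hA2 : ∀ {a a' : α}, a ≠ a' → fA a = fA a' → G.Adj a a' := by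
    intro a a' hne heq
    by_contra hnadj
    exact CA.valid (by rw [SimpleGraph.compl_adj]; exact ⟨hne, hnadj⟩) heq
  have hfB' : ∀ {x y : β}, H.Adj x y → fB x ≠ fB y := fun h => CB.valid h
  have MAIN : ∀ (s0 s1 : β) (r : ℕ),
      ((r = 1 ∧ s1 = s0 ∧ ∀ x y, ¬H.Adj x y) ∨
        (r = 2 ∧ fB s0 = 0 ∧ fB s1 = 1 ∧ H.Adj s0 s1)) →
      IndicatedColorable (lexProd G H) k := by
    intro s0 s1 r hseed
    have hkb := IndAux.counting (fA := fA) C0 hA2 hseed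
    show AnnWins (lexProd G H) k (fun _ => none)
    refine IndAux.phaseA hA2 hfB' hseed hkb _ (fun _ => 0) (fun _ => none) rfl
      ?_ ?_ ?_ ?_ ?_ ?_
    · intro v w col _ hv
      simp at hv
    · intro f x
      simp
    · intro f
      exact Nat.zero_le _
    · intro b _
      rfl
    · simp [IndAux.usedCols]
    · intro v w col hv
      simp at hv
  by_cases hE : ∃ x y : β, H.Adj x y
  · obtain ⟨x, y, hxy⟩ := hE
    have hnexy : fB x ≠ fB y := hfB' hxy
    by_cases h0 : fB x = 0
    · have h1 : fB y = 1 := IndAux.fin2_eq_one (fun h => hnexy (h0.trans h.symm))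
      exact MAIN x y 2 (Or.inr ⟨rfl, h0, h1, hxy⟩)
    · have h0' : fB x = 1 := IndAux.fin2_eq_one h0
      have h1 : fB y = 0 := IndAux.fin2_eq_zero (fun h => hnexy (by rw [h0', h]))
      exact MAIN y x 2 (Or.inr ⟨rfl, h1, h0', H.symm.symm _ _ hxy⟩)
  · push_neg at hE
    exact MAIN (Classical.arbitrary β) (Classical.arbitrary β) 1 (Or.inl ⟨rfl, rfl, hE⟩)
end
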